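/- arXiv:math/9803018 — 4 statements merged into one kernel-verified Lean document; each statement's English description precedes it below -/
import Mathlib

section
/- Let f be a field of characteristic 0, λ ∈ f with λ ≠ 0, and let m ≥ k−1 ≥ 0 be integers (k ≥ 1). Then in f[x_0, …, x_{m+k}] one has P^{(−1/λ)}_{mk}(x_0,…,x_{m+k}) = (1/((k−1)!·(−λ)^k)) · det M, where M is the k×k matrix whose first row is (x_{m+1}, x_{m+2}, …, x_{m+k}) and whose remaining k−1 rows are the rows of the matrix A(λ,k). -/
open scoped Classical

noncomputable section

/-- The generalized multinomial coefficient `(c choose p₁,…,p_{m+k})` attached to a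
partition `π` of `n`: numerator `c(c−1)⋯(c−ℓ(π)+1)`, denominator `∏ pᵢ!`. -/
def partMultCoeff {f : Type*} [Field f] (c : f) {n : ℕ} (π : Nat.Partition n) : f :=
  (∏ j ∈ Finset.range (Multiset.card π.parts), (c - j)) /
    ∏ i ∈ Finset.Icc 1 n, ((π.parts.count i).factorial : f)

/-- The polynomial `P^{(c)}_{mk} = Σ_π (c choose p₁,…,p_{m+k}) x₀^{p₀} x₁^{p₁} ⋯`,
summed over partitions `π = (1^{p₁} 2^{p₂} ⋯)` of `m+k` with largest part `> m`,
where `p₀ = k − ℓ(π)`. -/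
def Ppoly (f : Type*) [Field f] (c : f) (m k : ℕ) : MvPolynomial ℕ f :=
  ∑ π ∈ Finset.univ.filter (fun π : Nat.Partition (m + k) => ∃ a ∈ π.parts, m < a),
    MvPolynomial.C (partMultCoeff c π) * MvPolynomial.X 0 ^ (k - Multiset.card π.parts) *
      ∏ i ∈ Finset.Icc 1 (m + k), MvPolynomial.X i ^ (π.parts.count i)

/-- The entry of the matrix `A(λ,k)` in (1-based) row `r`, column `s`:
`((k−r)λ + (s−r))·x_{s−r}` if `s ≥ r`, and `0` otherwise. -/
def Aent {f : Type*} [Field f] (lam : f) (k r s : ℕ) : MvPolynomial ℕ f :=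
  if r ≤ s then
    MvPolynomial.C (((k - r : ℕ) : f) * lam + ((s - r : ℕ) : f)) * MvPolynomial.X (s - r)
  else 0

open Finset MvPolynomial

section Helpers

variable {f : Type*} [Field f] [CharZero f]
set_option linter.unusedSectionVars false

/-- The finset of partitions of `n` as multisets. -/
def PFin (n : ℕ) : Finset (Multiset ℕ) :=
  Finset.univ.image (fun π : Nat.Partition n => π.parts)

lemma mem_PFin {n : ℕ} {μ : Multiset ℕ} :
    μ ∈ PFin n ↔ (∀ i ∈ μ, 0 < i) ∧ μ.sum = n := by
  constructor
  · rintro h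
    rcases Finset.mem_image.1 h with ⟨π, -, rfl⟩
    exact ⟨fun i hi => π.parts_pos hi, π.parts_sum⟩
  · rintro ⟨h1, h2⟩
    exact Finset.mem_image.2 ⟨⟨μ, fun {i} hi => h1 i hi, h2⟩, Finset.mem_univ _, rfl⟩

lemma PFin_zero : PFin 0 = {0} := by
  ext μ
  simp only [mem_PFin, Finset.mem_singleton]
  constructor
  · rintro ⟨h1, h2⟩
    rw [Multiset.sum_eq_zero_iff] at h2
    ext a
    simp only [Multiset.count_zero, Multiset.count_eq_zero]
    intro ha
    have := h1 a ha
    have := h2 a ha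
    omega
  · rintro rfl; exact ⟨by simp, by simp⟩

lemma card_le_sum {μ : Multiset ℕ} (h : ∀ i ∈ μ, 0 < i) :
    Multiset.card μ ≤ μ.sum := by
  induction μ using Multiset.induction with
  | empty => simp
  | cons a s ih =>
    simp only [Multiset.card_cons, Multiset.sum_cons]
    have ha : 0 < a := h a (Multiset.mem_cons_self a s)
    have := ih (fun i hi => h i (Multiset.mem_cons_of_mem hi))
    omega

lemma mem_le_sum {μ : Multiset ℕ} {a : ℕ} (ha : a ∈ μ) : a ≤ μ.sum :=
  Multiset.single_le_sum (fun x _ => Nat.zero_le x) a ha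

/-- falling-factorial product -/
def ff (d : f) (l : ℕ) : f := ∏ j ∈ Finset.range l, (d - j)

/-- denominator: product of factorials of multiplicities -/
def fdenom (A : ℕ) (μ : Multiset ℕ) : f := ∏ i ∈ Finset.Icc 1 A, ((μ.count i).factorial : f)

def Xprod (μ : Multiset ℕ) : MvPolynomial ℕ f := (μ.map MvPolynomial.X).prod

lemma fdenom_ne_zero (A : ℕ) (μ : Multiset ℕ) : (fdenom A μ : f) ≠ 0 := by
  refine Finset.prod_ne_zero_iff.2 fun i _ => ?_
  exact_mod_cast Nat.cast_ne_zero.2 (Nat.factorial_ne_zero _)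

lemma fdenom_ext {A B : ℕ} {μ : Multiset ℕ} (hA : ∀ i ∈ μ, i ≤ A) (hAB : A ≤ B) :
    (fdenom B μ : f) = fdenom A μ := by
  unfold fdenom
  refine (Finset.prod_subset (Finset.Icc_subset_Icc_right hAB) fun i hi hni => ?_).symm
  have : i ∉ μ := fun hmem => hni (Finset.mem_Icc.2 ⟨(Finset.mem_Icc.1 hi).1, hA i hmem⟩)
  rw [Multiset.count_eq_zero.2 this]
  simp

lemma fdenom_cons {A a : ℕ} (μ : Multiset ℕ) (h1 : 1 ≤ a) (h2 : a ≤ A) :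
    (fdenom A (a ::ₘ μ) : f) = (μ.count a + 1) * fdenom A μ := by
  unfold fdenom
  have ha : a ∈ Finset.Icc 1 A := Finset.mem_Icc.2 ⟨h1, h2⟩
  rw [← Finset.mul_prod_erase _ _ ha, ← Finset.mul_prod_erase _ (fun i => ((μ.count i).factorial : f)) ha]
  have hcount : (a ::ₘ μ).count a = μ.count a + 1 := by simp
  rw [hcount]
  have : ∀ i ∈ (Finset.Icc 1 A).erase a, (((a ::ₘ μ).count i).factorial : f) = ((μ.count i).factorial : f) := by
    intro i hi
    rw [Multiset.count_cons_of_ne (Finset.ne_of_mem_erase hi) _]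
  rw [Finset.prod_congr rfl this, Nat.factorial_succ]
  push_cast
  ring

lemma Xprod_cons (a : ℕ) (μ : Multiset ℕ) :
    (Xprod (a ::ₘ μ) : MvPolynomial ℕ f) = X a * Xprod μ := by
  unfold Xprod; rw [Multiset.map_cons, Multiset.prod_cons]

lemma Xprod_eq_prod_count {A : ℕ} {μ : Multiset ℕ} (h : ∀ i ∈ μ, 1 ≤ i ∧ i ≤ A) :
    (∏ i ∈ Finset.Icc 1 A, (X i : MvPolynomial ℕ f) ^ μ.count i) = Xprod μ := by
  unfold Xprod
  rw [Finset.prod_multiset_map_count]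
  refine (Finset.prod_subset ?_ ?_).symm
  · intro i hi
    rw [Multiset.mem_toFinset] at hi
    exact Finset.mem_Icc.2 (h i hi)
  · intro i _ hni
    rw [Multiset.mem_toFinset] at hni
    rw [Multiset.count_eq_zero.2 hni, pow_zero]

lemma sum_count_smul {M : Type*} [AddCommMonoid M] {A : ℕ} {μ : Multiset ℕ}
    (h : ∀ i ∈ μ, 1 ≤ i ∧ i ≤ A) (g : ℕ → M) :
    (∑ i ∈ Finset.Icc 1 A, μ.count i • g i) = (μ.map g).sum := by
  rw [Finset.sum_multiset_map_count]
  refine (Finset.sum_subset ?_ ?_).symm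
  · intro i hi
    rw [Multiset.mem_toFinset] at hi
    exact Finset.mem_Icc.2 (h i hi)
  · intro i _ hni
    rw [Multiset.mem_toFinset] at hni
    rw [Multiset.count_eq_zero.2 hni, zero_smul]

end Helpers
section Rrec

variable {f : Type*} [Field f] [CharZero f]
set_option linter.unusedSectionVars false

/-- summand of `Rr` -/
def Rterm (d : f) (A : ℕ) (μ : Multiset ℕ) : MvPolynomial ℕ f :=
  C (ff d (Multiset.card μ) / fdenom A μ) * X 0 ^ (A - Multiset.card μ) * Xprod μ

/-- The "potential polynomial" `R_n` (homogeneous version). -/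
def Rr (d : f) (n : ℕ) : MvPolynomial ℕ f := ∑ μ ∈ PFin n, Rterm d n μ

lemma count_cast_ne_zero (ν : Multiset ℕ) (j : ℕ) : ((ν.count j + 1 : ℕ) : f) ≠ 0 :=
  Nat.cast_ne_zero.2 (Nat.succ_ne_zero _)

/-- Step-C per-term identity. -/
lemma stepC_term (d : f) {n j : ℕ} (hj1 : 1 ≤ j) (hjn : j ≤ n) {ν : Multiset ℕ}
    (hν : ν ∈ PFin (n - j)) :
    C ((((j ::ₘ ν).count j * j : ℕ)) : f) * Rterm d n (j ::ₘ ν)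
      = C ((j : f) * (d - Multiset.card ν)) * (X 0 ^ (j-1) * X j * Rterm d (n-j) ν) := by
  obtain ⟨hpos, hsum⟩ := mem_PFin.1 hν
  have hcard : Multiset.card ν ≤ n - j := hsum ▸ card_le_sum hpos
  have hub : ∀ i ∈ ν, i ≤ n - j := fun i hi => hsum ▸ mem_le_sum hi
  unfold Rterm
  rw [Multiset.card_cons, Xprod_cons, fdenom_cons ν hj1 hjn,
    fdenom_ext hub (Nat.sub_le n j), Multiset.count_cons_self]
  have hff : ff d (Multiset.card ν + 1) = ff d (Multiset.card ν) * (d - Multiset.card ν) := by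
    unfold ff; rw [Finset.prod_range_succ]
  rw [hff]
  have hexp : n - (Multiset.card ν + 1) = (j - 1) + ((n - j) - Multiset.card ν) := by omega
  rw [hexp, pow_add]
  have hc : ((((ν.count j + 1) * j : ℕ)) : f) *
      (ff d (Multiset.card ν) * (d - Multiset.card ν) / (((ν.count j : ℕ) + 1) * fdenom (n-j) ν))
      = ((j : f) * (d - Multiset.card ν)) * (ff d (Multiset.card ν) / fdenom (n-j) ν) := by
    have h1 : ((ν.count j + 1 : ℕ) : f) ≠ 0 := count_cast_ne_zero ν j
    have h2 : (fdenom (n-j) ν : f) ≠ 0 := fdenom_ne_zero _ _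
    push_cast at h1 ⊢
    field_simp
  have key : (C ((((ν.count j + 1) * j : ℕ)) : f) : MvPolynomial ℕ f) *
      C (ff d (Multiset.card ν) * (d - Multiset.card ν) / (((ν.count j : ℕ) + 1) * fdenom (n-j) ν))
      = C ((j : f) * (d - Multiset.card ν)) * C (ff d (Multiset.card ν) / fdenom (n-j) ν) := by
    rw [← map_mul, ← map_mul, hc]
  push_cast at key ⊢
  linear_combination (X 0 ^ (j-1) * X 0 ^ ((n-j) - Multiset.card ν) * X j * Xprod ν) * key

/-- Step C : transforming the inner sum by removing one part `j`. -/
lemma stepC (d : f) {n j : ℕ} (hj1 : 1 ≤ j) (hjn : j ≤ n) :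
    ∑ μ ∈ PFin n, C (((μ.count j * j : ℕ)) : f) * Rterm d n μ
      = ∑ ν ∈ PFin (n - j), C ((j : f) * (d - Multiset.card ν)) *
          (X 0 ^ (j-1) * X j * Rterm d (n-j) ν) := by
  rw [← Finset.sum_filter_of_ne (p := fun μ => j ∈ μ)
    (by
      intro μ hμ hne
      by_contra hj
      rw [Multiset.count_eq_zero.2 hj] at hne
      simp at hne)]
  refine Finset.sum_nbij' (fun μ => μ.erase j) (fun ν => j ::ₘ ν) ?_ ?_ ?_ ?_ ?_
  · intro μ hμ
    rw [Finset.mem_filter] at hμ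
    obtain ⟨hμ', hjμ⟩ := hμ
    obtain ⟨hpos, hsum⟩ := mem_PFin.1 hμ'
    refine mem_PFin.2 ⟨fun i hi => hpos i (Multiset.mem_of_mem_erase hi), ?_⟩
    have := Multiset.sum_erase (a := j) hjμ
    omega
  · intro ν hν
    obtain ⟨hpos, hsum⟩ := mem_PFin.1 hν
    refine Finset.mem_filter.2 ⟨mem_PFin.2 ⟨?_, ?_⟩, Multiset.mem_cons_self _ _⟩
    · intro i hi
      rcases Multiset.mem_cons.1 hi with rfl | hi
      · omega
      · exact hpos i hi
    · rw [Multiset.sum_cons]; omega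
  · intro μ hμ
    exact Multiset.cons_erase (Finset.mem_filter.1 hμ).2
  · intro ν hν
    exact Multiset.erase_cons_head j ν
  · intro μ hμ
    obtain ⟨hμ', hjμ⟩ := Finset.mem_filter.1 hμ
    have hmem : μ.erase j ∈ PFin (n - j) := by
      obtain ⟨hpos, hsum⟩ := mem_PFin.1 hμ'
      refine mem_PFin.2 ⟨fun i hi => hpos i (Multiset.mem_of_mem_erase hi), ?_⟩
      have := Multiset.sum_erase (a := j) hjμ
      omega
    conv_lhs => rw [← Multiset.cons_erase hjμ]
    exact stepC_term d hj1 hjn hmem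

end Rrec
section Rrec2

variable {f : Type*} [Field f] [CharZero f]
set_option linter.unusedSectionVars false
set_option maxHeartbeats 1000000

lemma sum_count_mul {A : ℕ} {μ : Multiset ℕ} (h : ∀ i ∈ μ, 1 ≤ i ∧ i ≤ A) :
    ∑ i ∈ Finset.Icc 1 A, μ.count i * i = μ.sum := by
  have := sum_count_smul h (id : ℕ → ℕ)
  simpa [smul_eq_mul] using this

lemma sum_count_card {A : ℕ} {μ : Multiset ℕ} (h : ∀ i ∈ μ, 1 ≤ i ∧ i ≤ A) :
    ∑ i ∈ Finset.Icc 1 A, μ.count i = Multiset.card μ := by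
  have := sum_count_smul h (fun _ => (1:ℕ))
  simpa [smul_eq_mul, Multiset.map_const', Multiset.sum_replicate] using this

lemma stepA (d : f) (n : ℕ) :
    C ((n : f)) * Rr d n
      = ∑ j ∈ Finset.Icc 1 n, ∑ μ ∈ PFin n, C (((μ.count j * j : ℕ)) : f) * Rterm d n μ := by
  rw [Finset.sum_comm, Rr, Finset.mul_sum]
  refine Finset.sum_congr rfl fun μ hμ => ?_
  obtain ⟨hpos, hsum⟩ := mem_PFin.1 hμ
  have hb : ∀ i ∈ μ, 1 ≤ i ∧ i ≤ n := fun i hi => ⟨hpos i hi, hsum ▸ mem_le_sum hi⟩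
  have h1 : ∑ j ∈ Finset.Icc 1 n, μ.count j * j = n := by rw [sum_count_mul hb, hsum]
  have h2 : (C ((n:f)) : MvPolynomial ℕ f) = ∑ j ∈ Finset.Icc 1 n, C (((μ.count j * j : ℕ)) : f) := by
    rw [← map_sum, ← Nat.cast_sum, h1]
  rw [h2, Finset.sum_mul]

lemma stepD_aux (d : f) {n i j : ℕ} (hi : 1 ≤ i) (hj : 1 ≤ j) (σ : Multiset ℕ)
    (hpos : ∀ x ∈ σ, 0 < x) (hsum : i + j + σ.sum = n) :
    C (((i ::ₘ σ).count i : f) * ((i:f) - (j:f))) * (X 0 ^ (j-1) * X j * Rterm d (n-j) (i ::ₘ σ))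
      = C (((i:f) - (j:f)) * (ff d (Multiset.card σ + 1)) / fdenom n σ) *
          (X 0 ^ (n - (Multiset.card σ + 2)) * (X i * X j * Xprod σ)) := by
  have hposc : ∀ x ∈ i ::ₘ σ, 0 < x := by
    intro x hx
    rcases Multiset.mem_cons.1 hx with rfl | hx
    · omega
    · exact hpos x hx
  have hsumc : (i ::ₘ σ).sum = n - j := by rw [Multiset.sum_cons]; omega
  have hcard : Multiset.card σ + 1 ≤ n - j := by
    have := card_le_sum hposc
    rw [hsumc] at this
    simpa using this
  have hub : ∀ x ∈ i ::ₘ σ, x ≤ n - j := fun x hx => hsumc ▸ mem_le_sum hx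
  have hin : i ≤ n := by omega
  unfold Rterm
  rw [Multiset.card_cons, Xprod_cons, Multiset.count_cons_self,
    ← fdenom_ext hub (Nat.sub_le n j), fdenom_cons σ hi hin]
  have hexp : (j - 1) + ((n - j) - (Multiset.card σ + 1)) = n - (Multiset.card σ + 2) := by omega
  have hc : ((σ.count i + 1 : ℕ) : f) * ((i:f) - (j:f)) *
      (ff d (Multiset.card σ + 1) / (((σ.count i : ℕ) + 1) * fdenom n σ))
      = ((i:f) - (j:f)) * (ff d (Multiset.card σ + 1)) / fdenom n σ := by
    have h1 : ((σ.count i + 1 : ℕ) : f) ≠ 0 := count_cast_ne_zero σ i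
    have h2 : (fdenom n σ : f) ≠ 0 := fdenom_ne_zero _ _
    push_cast at h1 ⊢
    field_simp
  have key : (C (((σ.count i + 1 : ℕ) : f) * ((i:f) - (j:f))) : MvPolynomial ℕ f) *
      C (ff d (Multiset.card σ + 1) / (((σ.count i : ℕ) + 1) * fdenom n σ))
      = C (((i:f) - (j:f)) * (ff d (Multiset.card σ + 1)) / fdenom n σ) := by
    rw [← map_mul, hc]
  rw [← hexp, pow_add]
  push_cast at key ⊢
  linear_combination (X 0 ^ (j-1) * X 0 ^ ((n-j) - (Multiset.card σ + 1)) * X i * X j * Xprod σ) * key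

lemma stepD (d : f) (n : ℕ) :
    ∑ j ∈ Finset.Icc 1 n, ∑ ν ∈ PFin (n - j),
      C ((n : f) - (j:f) - (j:f) * (Multiset.card ν : f)) *
        (X 0 ^ (j-1) * X j * Rterm d (n-j) ν) = 0 := by
  have hrw : ∀ j ∈ Finset.Icc 1 n, ∀ ν ∈ PFin (n - j),
      C ((n : f) - (j:f) - (j:f) * (Multiset.card ν : f)) * (X 0 ^ (j-1) * X j * Rterm d (n-j) ν)
      = ∑ i ∈ Finset.Icc 1 n, C ((ν.count i : f) * ((i:f) - (j:f))) *
          (X 0 ^ (j-1) * X j * Rterm d (n-j) ν) := by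
    intro j hj ν hν
    obtain ⟨hj1, hjn⟩ := Finset.mem_Icc.1 hj
    obtain ⟨hpos, hsum⟩ := mem_PFin.1 hν
    have hb : ∀ x ∈ ν, 1 ≤ x ∧ x ≤ n := fun x hx =>
      ⟨hpos x hx, le_trans (hsum ▸ mem_le_sum hx) (Nat.sub_le n j)⟩
    have hs1 := sum_count_mul hb
    have hs2 := sum_count_card hb
    have hscalar : ∑ i ∈ Finset.Icc 1 n, (ν.count i : f) * ((i:f) - (j:f))
        = (n : f) - (j:f) - (j:f) * (Multiset.card ν : f) := by
      simp only [mul_sub]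
      rw [Finset.sum_sub_distrib, ← Finset.sum_mul]
      rw [show ∑ i ∈ Finset.Icc 1 n, (ν.count i : f) * (i:f)
            = ((∑ i ∈ Finset.Icc 1 n, ν.count i * i : ℕ) : f) by push_cast; ring]
      rw [show ∑ i ∈ Finset.Icc 1 n, (ν.count i : f)
            = ((∑ i ∈ Finset.Icc 1 n, ν.count i : ℕ) : f) by push_cast; ring]
      rw [hs1, hs2, hsum, Nat.cast_sub hjn]
      ring
    rw [← hscalar, map_sum, Finset.sum_mul]
  rw [Finset.sum_congr rfl (fun j hj => Finset.sum_congr rfl (fun ν hν => hrw j hj ν hν))]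
  have hsig : ∀ j ∈ Finset.Icc 1 n, ∑ ν ∈ PFin (n - j), ∑ i ∈ Finset.Icc 1 n,
        C ((ν.count i : f) * ((i:f) - (j:f))) * (X 0 ^ (j-1) * X j * Rterm d (n-j) ν)
      = ∑ p ∈ (PFin (n - j)).sigma (fun _ => Finset.Icc 1 n),
        C ((p.1.count p.2 : f) * ((p.2:f) - (j:f))) * (X 0 ^ (j-1) * X j * Rterm d (n-j) p.1) := by
    intro j hj
    rw [Finset.sum_sigma]
  rw [Finset.sum_congr rfl hsig]
  rw [← Finset.sum_sigma (Finset.Icc 1 n)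
    (fun j => (PFin (n - j)).sigma (fun _ => Finset.Icc 1 n))
    (fun a => C ((a.2.1.count a.2.2 : f) * ((a.2.2:f) - (a.1:f))) *
      (X 0 ^ (a.1-1) * X a.1 * Rterm d (n-a.1) a.2.1))]
  rw [← Finset.sum_filter_of_ne (p := fun a => a.2.2 ∈ a.2.1)
    (by
      intro a ha hne
      by_contra hmem
      rw [Multiset.count_eq_zero.2 hmem] at hne
      simp at hne)]
  refine Finset.sum_involution
    (fun a _ => ⟨a.2.2, ⟨a.1 ::ₘ a.2.1.erase a.2.2, a.1⟩⟩) ?_ ?_ ?_ ?_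
  · rintro ⟨j, ν, i⟩ ha
    obtain ⟨hs, hiν⟩ := Finset.mem_filter.1 ha
    obtain ⟨hjI, hs2⟩ := Finset.mem_sigma.1 hs
    obtain ⟨hνP, hiI⟩ := Finset.mem_sigma.1 hs2
    obtain ⟨hj1, hjn⟩ := Finset.mem_Icc.1 hjI
    obtain ⟨hi1, hin⟩ := Finset.mem_Icc.1 hiI
    obtain ⟨hpos, hsum⟩ := mem_PFin.1 hνP
    dsimp only at *
    set σ := ν.erase i with hσ
    have hσpos : ∀ x ∈ σ, 0 < x := fun x hx => hpos x (Multiset.mem_of_mem_erase hx)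
    have hσsum : i + j + σ.sum = n := by
      have h5 := Multiset.sum_erase (a := i) hiν
      rw [hσ]
      omega
    have e1 : C ((ν.count i : f) * ((i:f) - (j:f))) * (X 0 ^ (j-1) * X j * Rterm d (n-j) ν)
        = C (((i:f) - (j:f)) * (ff d (Multiset.card σ + 1)) / fdenom n σ) *
          (X 0 ^ (n - (Multiset.card σ + 2)) * (X i * X j * Xprod σ)) := by
      conv_lhs => rw [← Multiset.cons_erase hiν]
      exact stepD_aux d hi1 hj1 σ hσpos hσsum
    have e2 : C (((j ::ₘ σ).count j : f) * ((j:f) - (i:f))) *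
          (X 0 ^ (i-1) * X i * Rterm d (n-i) (j ::ₘ σ))
        = C (((j:f) - (i:f)) * (ff d (Multiset.card σ + 1)) / fdenom n σ) *
          (X 0 ^ (n - (Multiset.card σ + 2)) * (X j * X i * Xprod σ)) := by
      exact stepD_aux d hj1 hi1 σ hσpos (by omega)
    rw [e1, e2]
    have hz : (((i:f) - (j:f)) * (ff d (Multiset.card σ + 1)) / fdenom n σ)
        + (((j:f) - (i:f)) * (ff d (Multiset.card σ + 1)) / fdenom n σ) = 0 := by ring
    have hcomm : (X j * X i * Xprod σ : MvPolynomial ℕ f) = X i * X j * Xprod σ := by ring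
    rw [hcomm, ← add_mul, ← map_add, hz, map_zero, zero_mul]
  · rintro ⟨j, ν, i⟩ ha hne
    intro hga
    apply hne
    have hij : i = j := congrArg Sigma.fst hga
    dsimp only at *
    rw [hij, sub_self, mul_zero, map_zero, zero_mul]
  · rintro ⟨j, ν, i⟩ ha
    obtain ⟨hs, hiν⟩ := Finset.mem_filter.1 ha
    obtain ⟨hjI, hs2⟩ := Finset.mem_sigma.1 hs
    obtain ⟨hνP, hiI⟩ := Finset.mem_sigma.1 hs2
    obtain ⟨hj1, hjn⟩ := Finset.mem_Icc.1 hjI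
    obtain ⟨hi1, hin⟩ := Finset.mem_Icc.1 hiI
    obtain ⟨hpos, hsum⟩ := mem_PFin.1 hνP
    dsimp only at *
    refine Finset.mem_filter.2 ⟨Finset.mem_sigma.2 ⟨hiI, Finset.mem_sigma.2 ⟨?_, hjI⟩⟩,
      Multiset.mem_cons_self _ _⟩
    refine mem_PFin.2 ⟨?_, ?_⟩
    · intro x hx
      rcases Multiset.mem_cons.1 hx with rfl | hx
      · omega
      · exact hpos x (Multiset.mem_of_mem_erase hx)
    · rw [Multiset.sum_cons]
      show j + (ν.erase i).sum = n - i
      have h5 := Multiset.sum_erase (a := i) hiν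
      omega
  · rintro ⟨j, ν, i⟩ ha
    obtain ⟨hs, hiν⟩ := Finset.mem_filter.1 ha
    dsimp only at *
    rw [Multiset.erase_cons_head, Multiset.cons_erase hiν]

/-- The key recurrence for `Rr`. -/
theorem Rr_rec (d : f) (n : ℕ) :
    C ((n : f)) * Rr d n
      = ∑ j ∈ Finset.Icc 1 n,
          C ((d+1) * (j:f) - (n:f)) * (X 0 ^ (j-1) * X j * Rr d (n-j)) := by
  rw [stepA]
  rw [Finset.sum_congr rfl (fun j hj => stepC d (Finset.mem_Icc.1 hj).1 (Finset.mem_Icc.1 hj).2)]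
  have h2 : ∀ j ∈ Finset.Icc 1 n,
      (C ((d+1) * (j:f) - (n:f)) : MvPolynomial ℕ f) * (X 0 ^ (j-1) * X j * Rr d (n-j))
      = ∑ ν ∈ PFin (n - j), C ((d+1) * (j:f) - (n:f)) *
          (X 0 ^ (j-1) * X j * Rterm d (n-j) ν) := by
    intro j hj
    rw [Rr, Finset.mul_sum, Finset.mul_sum]
  rw [Finset.sum_congr rfl h2]
  rw [← sub_eq_zero, ← Finset.sum_sub_distrib]
  have h3 : ∀ j ∈ Finset.Icc 1 n,
      ((∑ ν ∈ PFin (n - j), C ((j : f) * (d - Multiset.card ν)) *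
          (X 0 ^ (j-1) * X j * Rterm d (n-j) ν))
        - ∑ ν ∈ PFin (n - j), C ((d+1) * (j:f) - (n:f)) *
          (X 0 ^ (j-1) * X j * Rterm d (n-j) ν))
      = ∑ ν ∈ PFin (n - j), C ((n : f) - (j:f) - (j:f) * (Multiset.card ν : f)) *
          (X 0 ^ (j-1) * X j * Rterm d (n-j) ν) := by
    intro j hj
    rw [← Finset.sum_sub_distrib]
    refine Finset.sum_congr rfl fun ν hν => ?_
    rw [← sub_mul, ← map_sub]
    have : (j : f) * (d - (Multiset.card ν : f)) - ((d+1) * (j:f) - (n:f))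
        = (n : f) - (j:f) - (j:f) * (Multiset.card ν : f) := by ring
    rw [this]
  rw [Finset.sum_congr rfl h3, stepD]

end Rrec2
section Det

variable {f : Type*} [Field f] [CharZero f]
set_option linter.unusedSectionVars false
set_option maxHeartbeats 1000000

/-- The Hessenberg-type matrix with prescribed first row `φ`. -/
def MatF (lam : f) (n : ℕ) (φ : ℕ → MvPolynomial ℕ f) :
    Matrix (Fin n) (Fin n) (MvPolynomial ℕ f) :=
  Matrix.of fun r s =>
    if (r : ℕ) = 0 then φ (s : ℕ)
    else if (r : ℕ) ≤ (s : ℕ) + 1 then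
      C (((n - (r:ℕ) : ℕ) : f) * lam + (((s:ℕ) + 1 - (r:ℕ) : ℕ) : f)) * X ((s:ℕ) + 1 - (r:ℕ))
    else 0

/-- The coefficient-type first row. -/
def rho (lam : f) (c t : ℕ) : ℕ → MvPolynomial ℕ f :=
  fun s => C ((c : f) * lam + ((s + t : ℕ) : f)) * X (s + t)

def Wdet (lam : f) (n : ℕ) : MvPolynomial ℕ f := (MatF lam n (rho lam n 1)).det

lemma rho_shift (lam : f) (c t : ℕ) : (fun s => rho lam c t (s+1)) = rho lam c (t+1) := by
  funext s
  unfold rho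
  have : s + 1 + t = s + (t + 1) := by omega
  rw [this]

lemma Wdet_zero (lam : f) : Wdet lam 0 = 1 := Matrix.det_fin_zero

lemma MatF_rec (lam : f) (n : ℕ) (φ : ℕ → MvPolynomial ℕ f) :
    (MatF lam (n+1) φ).det
      = φ 0 * (MatF lam n (rho lam n 1)).det
        - C ((n : f) * lam) * X 0 * (MatF lam n (fun s => φ (s+1))).det := by
  match n with
  | 0 =>
    rw [Matrix.det_fin_one, Matrix.det_fin_zero, Matrix.det_fin_zero]
    simp [MatF]
  | Nat.succ m =>
    simp only [Nat.succ_eq_add_one]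
    rw [Matrix.det_succ_column_zero, Fin.sum_univ_succ, Fin.sum_univ_succ]
    have hzero : ∀ i : Fin m,
        ((-1 : MvPolynomial ℕ f) ^ ((i.succ.succ : Fin (m+1+1)) : ℕ) *
          (MatF lam (m+1+1) φ) i.succ.succ 0 *
          ((MatF lam (m+1+1) φ).submatrix (Fin.succAbove i.succ.succ) Fin.succ).det) = 0 := by
      intro i
      have hv : ((i.succ.succ : Fin (m+1+1)) : ℕ) = (i : ℕ) + 2 := by simp
      have hentry : (MatF lam (m+1+1) φ) i.succ.succ 0 = 0 := by
        simp only [MatF, Matrix.of_apply, hv, Fin.val_zero]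
        rw [if_neg (show ¬ ((i:ℕ) + 2 = 0) by omega),
          if_neg (show ¬ ((i:ℕ) + 2 ≤ 0 + 1) by omega)]
      rw [hentry, mul_zero, zero_mul]
    rw [Finset.sum_eq_zero (fun i _ => hzero i), add_zero]
    have hsub0 : (MatF lam (m+1+1) φ).submatrix ((0 : Fin (m+1+1)).succAbove) Fin.succ
        = MatF lam (m+1) (rho lam (m+1) 1) := by
      refine Matrix.ext (fun r s => ?_)
      simp only [Matrix.submatrix_apply, MatF, Matrix.of_apply, Fin.succAbove_zero, Fin.val_succ,
        rho]
      by_cases hr : (r : ℕ) = 0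
      · simp only [hr]
        rw [if_neg (show ¬ ((0:ℕ) + 1 = 0) by omega),
          if_pos (show (0:ℕ) + 1 ≤ (s:ℕ) + 1 + 1 by omega)]
        simp only [if_true]
        rw [show m + 1 + 1 - (0 + 1) = m + 1 by omega,
          show (s:ℕ) + 1 + 1 - (0 + 1) = (s:ℕ) + 1 by omega]
      · rw [if_neg (show ¬ ((r:ℕ) + 1 = 0) by omega), if_neg hr]
        by_cases h : (r:ℕ) ≤ (s:ℕ) + 1
        · rw [if_pos (show (r:ℕ) + 1 ≤ (s:ℕ) + 1 + 1 by omega), if_pos h]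
          rw [show m + 1 + 1 - ((r:ℕ) + 1) = m + 1 - (r:ℕ) by omega,
            show (s:ℕ) + 1 + 1 - ((r:ℕ) + 1) = (s:ℕ) + 1 - (r:ℕ) by omega]
        · rw [if_neg (show ¬ ((r:ℕ) + 1 ≤ (s:ℕ) + 1 + 1) by omega), if_neg h]
    have hval : ∀ r : Fin (m+1), (((1 : Fin (m+1+1)).succAbove r : Fin (m+1+1)) : ℕ)
        = if (r:ℕ) = 0 then 0 else (r:ℕ) + 1 := by
      intro r
      by_cases h : (r : ℕ) = 0
      · rw [Fin.succAbove_of_castSucc_lt, if_pos h]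
        · simp [h]
        · rw [Fin.lt_def]
          simp [h]
      · rw [Fin.succAbove_of_le_castSucc, if_neg h]
        · simp
        · rw [Fin.le_def]
          simp only [Fin.coe_castSucc, Fin.val_one]
          omega
    have hsub1 : (MatF lam (m+1+1) φ).submatrix ((1 : Fin (m+1+1)).succAbove) Fin.succ
        = MatF lam (m+1) (fun s => φ (s+1)) := by
      refine Matrix.ext (fun r s => ?_)
      simp only [Matrix.submatrix_apply, MatF, Matrix.of_apply, Fin.val_succ]
      rw [hval r]
      by_cases hr : (r : ℕ) = 0
      · rw [if_pos hr, if_pos rfl, if_pos hr]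
      · rw [if_neg hr, if_neg hr]
        rw [if_neg (show ¬ ((r:ℕ) + 1 = 0) by omega)]
        by_cases h : (r:ℕ) ≤ (s:ℕ) + 1
        · rw [if_pos (show (r:ℕ) + 1 ≤ (s:ℕ) + 1 + 1 by omega), if_pos h]
          rw [show m + 1 + 1 - ((r:ℕ) + 1) = m + 1 - (r:ℕ) by omega,
            show (s:ℕ) + 1 + 1 - ((r:ℕ) + 1) = (s:ℕ) + 1 - (r:ℕ) by omega]
        · rw [if_neg (show ¬ ((r:ℕ) + 1 ≤ (s:ℕ) + 1 + 1) by omega), if_neg h]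
    have hM00 : (MatF lam (m+1+1) φ) 0 0 = φ 0 := by
      simp [MatF]
    have hM10 : (MatF lam (m+1+1) φ) (Fin.succ 0) 0 = C (((m+1 : ℕ) : f) * lam) * X 0 := by
      simp only [MatF, Matrix.of_apply, Fin.val_succ, Fin.val_zero]
      simp only [show ¬ ((0:ℕ) + 1 = 0) by omega,
        show (0:ℕ) + 1 ≤ 0 + 1 by omega, ↓reduceIte]
      rw [show m + 1 + 1 - (0 + 1) = m + 1 by omega, show (0:ℕ) + 1 - (0 + 1) = 0 by omega]
      push_cast
      ring_nf
    rw [Fin.succ_zero_eq_one] at *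
    rw [hsub0, hsub1, hM00, hM10]
    have h0 : (((0 : Fin (m+1+1))) : ℕ) = 0 := rfl
    have h1 : (((1 : Fin (m+1+1))) : ℕ) = 1 := rfl
    rw [h0, h1]
    push_cast
    ring

end Det
section Det2

variable {f : Type*} [Field f] [CharZero f]
set_option linter.unusedSectionVars false
set_option maxHeartbeats 1000000

lemma Rr_zero (d : f) : Rr d 0 = 1 := by
  rw [Rr, PFin_zero, Finset.sum_singleton]
  unfold Rterm ff fdenom Xprod
  simp

lemma MatF_det_expand (lam : f) : ∀ (n : ℕ) (φ : ℕ → MvPolynomial ℕ f),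
    (MatF lam (n+1) φ).det
      = ∑ i ∈ Finset.range (n+1),
          C ((-lam) ^ i * (n.descFactorial i : f)) * (X 0 ^ i * φ i * Wdet lam (n - i)) := by
  intro n
  induction n with
  | zero =>
    intro φ
    rw [MatF_rec, Finset.sum_range_one]
    norm_num [Matrix.det_fin_zero, Wdet_zero]
  | succ n ih =>
    intro φ
    rw [MatF_rec]
    have hW : (MatF lam (n+1) (rho lam (n+1) 1)).det = Wdet lam (n+1) := rfl
    rw [hW, ih (fun s => φ (s+1))]
    conv_rhs => rw [Finset.sum_range_succ']
    have hF0 : (C ((-lam) ^ 0 * ((n+1).descFactorial 0 : f)) : MvPolynomial ℕ f) *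
        (X 0 ^ 0 * φ 0 * Wdet lam (n + 1 - 0)) = φ 0 * Wdet lam (n+1) := by
      simp
    rw [hF0, sub_eq_add_neg, add_comm]
    congr 1
    rw [Finset.mul_sum, ← Finset.sum_neg_distrib]
    refine Finset.sum_congr rfl fun i hi => ?_
    rw [show n + 1 - (i + 1) = n - i from by omega]
    have key : (C ((-lam)^(i+1) * (((n+1).descFactorial (i+1)) : f)) : MvPolynomial ℕ f)
        = - (C (((n+1 : ℕ) : f) * lam) * C ((-lam)^i * ((n.descFactorial i) : f))) := by
      rw [← map_mul, ← map_neg]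
      congr 1
      rw [Nat.succ_descFactorial_succ]
      push_cast
      ring
    rw [key]
    ring

theorem Wdet_closed (lam : f) (hlam : lam ≠ 0) : ∀ n : ℕ,
    Wdet lam n = C ((n.factorial : f) * (-lam)^n) * Rr (-lam⁻¹ - 1) n := by
  intro n
  induction n using Nat.strong_induction_on with
  | _ n ih =>
    match n with
    | 0 => simp [Wdet_zero, Rr_zero]
    | Nat.succ n =>
      have hstep : Wdet lam (n+1) = (MatF lam (n+1) (rho lam (n+1) 1)).det := rfl
      rw [hstep, MatF_det_expand]
      set d : f := -lam⁻¹ - 1 with hd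
      have hterm : ∀ i ∈ Finset.range (n+1),
          (C ((-lam) ^ i * (n.descFactorial i : f)) : MvPolynomial ℕ f) *
            (X 0 ^ i * rho lam (n+1) 1 i * Wdet lam (n - i))
          = C (((n.factorial : f) * (-lam)^(n+1))) *
              (C ((d+1) * ((i+1 : ℕ) : f) - ((n+1 : ℕ) : f)) *
                (X 0 ^ i * X (i+1) * Rr d (n - i))) := by
        intro i hi
        have hin : i ≤ n := by
          have := Finset.mem_range.1 hi; omega
        rw [ih (n - i) (by omega)]
        have hrho : rho lam (n+1) 1 i
            = C (((n+1 : ℕ) : f) * lam + ((i+1 : ℕ) : f)) * X (i+1) := rfl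
        rw [hrho]
        have hfact : ((n - i).factorial * n.descFactorial i : ℕ) = n.factorial :=
          Nat.factorial_mul_descFactorial hin
        have hscal : ((-lam) ^ i * (n.descFactorial i : f)) *
              ((((n+1 : ℕ) : f) * lam + ((i+1 : ℕ) : f)) *
                (((n - i).factorial : f) * (-lam)^(n-i)))
            = ((n.factorial : f) * (-lam)^(n+1)) *
                ((d+1) * ((i+1 : ℕ) : f) - ((n+1 : ℕ) : f)) := by
          have hfc : ((n - i).factorial : f) * (n.descFactorial i : f) = (n.factorial : f) := by
            exact_mod_cast congrArg (Nat.cast (R := f)) hfact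
          have hpow : ((-lam) ^ i : f) * (-lam)^(n-i) = (-lam)^n := by
            rw [← pow_add]
            congr 1
            omega
          rw [hd]
          have hmid : (-lam) * ((-lam⁻¹ - 1 + 1) * ((i+1 : ℕ) : f) - ((n+1 : ℕ) : f))
              = ((n+1 : ℕ) : f) * lam + ((i+1 : ℕ) : f) := by
            field_simp
            ring
          calc ((-lam) ^ i * (n.descFactorial i : f)) *
              ((((n+1 : ℕ) : f) * lam + ((i+1 : ℕ) : f)) *
                (((n - i).factorial : f) * (-lam)^(n-i)))
              = (((n - i).factorial : f) * (n.descFactorial i : f)) *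
                  ((-lam)^i * (-lam)^(n-i)) *
                  ((((n+1 : ℕ) : f) * lam + ((i+1 : ℕ) : f))) := by ring
            _ = (n.factorial : f) * (-lam)^n *
                  ((((n+1 : ℕ) : f) * lam + ((i+1 : ℕ) : f))) := by rw [hfc, hpow]
            _ = ((n.factorial : f) * (-lam)^(n+1)) *
                  ((-lam⁻¹ - 1 + 1) * ((i+1 : ℕ) : f) - ((n+1 : ℕ) : f)) := by
                rw [pow_succ]
                linear_combination (-((n.factorial : f) * (-lam) ^ n)) * hmid
        have keyC : (C ((-lam) ^ i * (n.descFactorial i : f)) : MvPolynomial ℕ f) *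
              (C ((((n+1 : ℕ) : f) * lam + ((i+1 : ℕ) : f))) *
                C ((((n - i).factorial : f) * (-lam)^(n-i))))
            = C (((n.factorial : f) * (-lam)^(n+1))) *
                C (((d+1) * ((i+1 : ℕ) : f) - ((n+1 : ℕ) : f))) := by
          rw [← map_mul, ← map_mul, ← map_mul, hscal]
        push_cast at keyC ⊢
        linear_combination (X 0 ^ i * X (i+1) * Rr d (n - i)) * keyC
      rw [Finset.sum_congr rfl hterm, ← Finset.mul_sum]
      have hicc : ∑ i ∈ Finset.range (n+1),
            (C ((d+1) * ((i+1 : ℕ) : f) - ((n+1 : ℕ) : f)) : MvPolynomial ℕ f) *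
              (X 0 ^ i * X (i+1) * Rr d (n - i))
          = ∑ j ∈ Finset.Icc 1 (n+1),
              C ((d+1) * (j : f) - ((n+1 : ℕ) : f)) * (X 0 ^ (j-1) * X j * Rr d (n+1-j)) := by
        refine Finset.sum_nbij' (fun i => i + 1) (fun j => j - 1) ?_ ?_ ?_ ?_ ?_
        · intro a ha
          have := Finset.mem_range.1 ha
          exact Finset.mem_Icc.2 (by omega)
        · intro a ha
          have := Finset.mem_Icc.1 ha
          exact Finset.mem_range.2 (by omega)
        · intro a ha; omega
        · intro a ha
          have := Finset.mem_Icc.1 ha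
          omega
        · intro a ha
          have := Finset.mem_range.1 ha
          rw [show a + 1 - 1 = a from by omega, show n + 1 - (a+1) = n - a from by omega]
      rw [hicc, ← Rr_rec]
      rw [← mul_assoc, ← map_mul]
      congr 2
      simp only [Nat.succ_eq_add_one]
      push_cast [Nat.factorial_succ]
      ring

end Det2
section Assemble

variable {f : Type*} [Field f] [CharZero f]
set_option linter.unusedSectionVars false
set_option maxHeartbeats 1000000

lemma Ppoly_eq_multiset (c : f) (m k : ℕ) :
    Ppoly f c m k = ∑ μ ∈ (PFin (m+k)).filter (fun μ => ∃ a ∈ μ, m < a),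
      C (ff c (Multiset.card μ) / fdenom (m+k) μ) * X 0 ^ (k - Multiset.card μ) *
        ∏ i ∈ Finset.Icc 1 (m+k), X i ^ (μ.count i) := by
  rw [Ppoly]
  refine Finset.sum_bij (fun (π : Nat.Partition (m + k)) _ => π.parts) ?_ ?_ ?_ ?_
  · intro π hπ
    exact Finset.mem_filter.2 ⟨mem_PFin.2 ⟨fun i hi => π.parts_pos hi, π.parts_sum⟩,
      (Finset.mem_filter.1 hπ).2⟩
  · intro a ha b hb hab
    exact Nat.Partition.ext hab
  · intro μ hμ
    obtain ⟨hμP, hbig⟩ := Finset.mem_filter.1 hμ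
    obtain ⟨hpos, hsum⟩ := mem_PFin.1 hμP
    exact ⟨⟨μ, fun {i} hi => hpos i hi, hsum⟩, Finset.mem_filter.2 ⟨Finset.mem_univ _, hbig⟩, rfl⟩
  · intro π hπ
    rfl

lemma assemble_term (c : f) {K m : ℕ} (hKm : K ≤ m) {i : ℕ} (hiK : i ≤ K)
    {μ : Multiset ℕ} (hμ : μ ∈ PFin (K - i)) :
    C (ff c (Multiset.card ((m+1+i) ::ₘ μ)) / fdenom (m+(K+1)) ((m+1+i) ::ₘ μ)) *
        X 0 ^ ((K+1) - Multiset.card ((m+1+i) ::ₘ μ)) *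
        ∏ t ∈ Finset.Icc 1 (m+(K+1)), X t ^ (((m+1+i) ::ₘ μ).count t)
      = C c * (X 0 ^ i * X (m+1+i) * Rterm (c-1) (K-i) μ) := by
  obtain ⟨hpos, hsum⟩ := mem_PFin.1 hμ
  have hub : ∀ x ∈ μ, x ≤ K - i := fun x hx => hsum ▸ mem_le_sum hx
  have hcard : Multiset.card μ ≤ K - i := hsum ▸ card_le_sum hpos
  have count0 : μ.count (m+1+i) = 0 := by
    rw [Multiset.count_eq_zero]
    intro hmem
    have := hub _ hmem
    omega
  have hff : ff c (Multiset.card μ + 1) = ff (c-1) (Multiset.card μ) * c := by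
    unfold ff
    rw [Finset.prod_range_succ']
    congr 1
    · refine Finset.prod_congr rfl fun j _ => ?_
      push_cast
      ring
    · simp
  have hfd : (fdenom (m+(K+1)) ((m+1+i) ::ₘ μ) : f) = fdenom (K-i) μ := by
    rw [fdenom_cons μ (by omega) (by omega), count0]
    rw [fdenom_ext (A := K - i) (B := m + (K+1)) (μ := μ) (fun x hx => hub x hx) (by omega)]
    norm_num
  have hX : (∏ t ∈ Finset.Icc 1 (m+(K+1)), (X t : MvPolynomial ℕ f) ^ (((m+1+i) ::ₘ μ).count t))
      = X (m+1+i) * Xprod μ := by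
    rw [Xprod_eq_prod_count (by
      intro x hx
      rcases Multiset.mem_cons.1 hx with rfl | hx
      · omega
      · exact ⟨hpos x hx, le_trans (hub x hx) (by omega)⟩), Xprod_cons]
  rw [Multiset.card_cons, hff, hfd, hX]
  have hexp : (K+1) - (Multiset.card μ + 1) = i + ((K-i) - Multiset.card μ) := by omega
  rw [hexp, pow_add]
  unfold Rterm
  have key : (C (ff (c-1) (Multiset.card μ) * c / fdenom (K-i) μ) : MvPolynomial ℕ f)
      = C c * C (ff (c-1) (Multiset.card μ) / fdenom (K-i) μ) := by
    rw [← map_mul]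
    congr 1
    ring
  rw [key]
  ring

lemma assemble (c : f) {K m : ℕ} (hKm : K ≤ m) :
    ∑ μ ∈ (PFin (m+(K+1))).filter (fun μ => ∃ a ∈ μ, m < a),
      C (ff c (Multiset.card μ) / fdenom (m+(K+1)) μ) * X 0 ^ ((K+1) - Multiset.card μ) *
        ∏ t ∈ Finset.Icc 1 (m+(K+1)), X t ^ (μ.count t)
    = ∑ p ∈ (Finset.range (K+1)).sigma (fun i => PFin (K - i)),
        C c * (X 0 ^ p.1 * X (m+1+p.1) * Rterm (c-1) (K-p.1) p.2) := by
  refine (Finset.sum_bij (fun (p : (_ : ℕ) × Multiset ℕ) (_ : p ∈ _) => (m+1+p.1) ::ₘ p.2)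
    ?_ ?_ ?_ ?_).symm
  · rintro ⟨i, μ⟩ hp
    dsimp only
    obtain ⟨hiR, hμP⟩ := Finset.mem_sigma.1 hp
    have hiK : i ≤ K := by have := Finset.mem_range.1 hiR; dsimp only at this; omega
    obtain ⟨hpos, hsum⟩ := mem_PFin.1 hμP
    dsimp only at hsum
    refine Finset.mem_filter.2 ⟨mem_PFin.2 ⟨?_, ?_⟩, ⟨m+1+i, Multiset.mem_cons_self _ _, by omega⟩⟩
    · intro x hx
      rcases Multiset.mem_cons.1 hx with rfl | hx
      · omega
      · exact hpos x hx
    · rw [Multiset.sum_cons]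
      omega
  · rintro ⟨i, μ⟩ hp ⟨i', μ'⟩ hq h
    dsimp only at h
    obtain ⟨hiR, hμP⟩ := Finset.mem_sigma.1 hp
    obtain ⟨hiR', hμP'⟩ := Finset.mem_sigma.1 hq
    have hiK : i ≤ K := by have := Finset.mem_range.1 hiR; dsimp only at this; omega
    have hiK' : i' ≤ K := by have := Finset.mem_range.1 hiR'; dsimp only at this; omega
    obtain ⟨hpos, hsum⟩ := mem_PFin.1 hμP
    have hub : ∀ x ∈ μ, x ≤ K - i := fun x hx => hsum ▸ mem_le_sum hx
    have hii : i = i' := by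
      have hmem : (m+1+i') ∈ (m+1+i) ::ₘ μ := h ▸ Multiset.mem_cons_self _ _
      rcases Multiset.mem_cons.1 hmem with he | hin
      · omega
      · have := hub _ hin
        omega
    subst hii
    have hμμ : μ = μ' := by
      have := (Multiset.cons_inj_right (m+1+i)).1 h
      exact this
    subst hμμ
    rfl
  · intro ν hν
    obtain ⟨hνP, a, haν, ham⟩ := Finset.mem_filter.1 hν
    obtain ⟨hpos, hsum⟩ := mem_PFin.1 hνP
    have haub : a ≤ m + (K+1) := hsum ▸ mem_le_sum haν
    have hsumerase := Multiset.sum_erase (a := a) haν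
    have h1 : a - (m+1) < K + 1 := by omega
    have h2 : (ν.erase a).sum = K - (a - (m+1)) := by omega
    refine ⟨⟨a - (m+1), ν.erase a⟩, Finset.mem_sigma.2 ⟨Finset.mem_range.2 h1,
      mem_PFin.2 ⟨fun x hx => hpos x (Multiset.mem_of_mem_erase hx), h2⟩⟩, ?_⟩
    dsimp only
    rw [show m + 1 + (a - (m+1)) = a from by omega]
    exact Multiset.cons_erase haν
  · rintro ⟨i, μ⟩ hp
    obtain ⟨hiR, hμP⟩ := Finset.mem_sigma.1 hp
    have hiK : i ≤ K := by have := Finset.mem_range.1 hiR; dsimp only at this; omega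
    exact (assemble_term c hKm hiK hμP).symm

end Assemble

section Main

/-- For a field `f` of characteristic `0`, `λ ≠ 0`, and `m ≥ k−1 ≥ 0`,
`P^{(−1/λ)}_{mk} = (1/((k−1)!·(−λ)^k))·det M`, where `M` has first row
`(x_{m+1}, …, x_{m+k})` and remaining rows the rows of `A(λ,k)`. -/
theorem Ppoly_eq_det (f : Type*) [Field f] [CharZero f] (lam : f) (hlam : lam ≠ 0)
    (m k : ℕ) (hk : 1 ≤ k) (hm : k - 1 ≤ m) :
    Ppoly f (-lam⁻¹) m k =
      MvPolynomial.C ((((k - 1).factorial : f) * (-lam) ^ k)⁻¹) *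
        (Matrix.of fun r s : Fin k =>
          if (r : ℕ) = 0 then MvPolynomial.X (m + 1 + (s : ℕ))
          else Aent lam k (r : ℕ) ((s : ℕ) + 1)).det := by
  obtain ⟨K, rfl⟩ : ∃ K, k = K + 1 := ⟨k - 1, by omega⟩
  have hKm : K ≤ m := by omega
  have hmat : (Matrix.of fun r s : Fin (K+1) =>
      if (r : ℕ) = 0 then (X (m + 1 + (s : ℕ)) : MvPolynomial ℕ f)
      else Aent lam (K+1) (r : ℕ) ((s : ℕ) + 1))
      = MatF lam (K+1) (fun s => X (m+1+s)) := by
    refine Matrix.ext fun r s => ?_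
    simp only [Matrix.of_apply, MatF, Aent]
  rw [hmat, MatF_det_expand, show (K + 1 - 1) = K from by omega]
  have hterm : ∀ i ∈ Finset.range (K+1),
      (C ((-lam)^i * (K.descFactorial i : f)) : MvPolynomial ℕ f) *
        (X 0^i * X (m+1+i) * Wdet lam (K-i))
      = C ((K.factorial : f) * (-lam)^K) * (X 0^i * X (m+1+i) * Rr (-lam⁻¹ - 1) (K-i)) := by
    intro i hi
    have hiK : i ≤ K := by have := Finset.mem_range.1 hi; omega
    rw [Wdet_closed lam hlam (K-i)]
    have hscal : ((-lam)^i * (K.descFactorial i : f)) * (((K-i).factorial : f) * (-lam)^(K-i))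
        = (K.factorial : f) * (-lam)^K := by
      have hfc : ((K - i).factorial : f) * (K.descFactorial i : f) = (K.factorial : f) := by
        exact_mod_cast congrArg (Nat.cast (R := f)) (Nat.factorial_mul_descFactorial hiK)
      have hpow : ((-lam) ^ i : f) * (-lam)^(K-i) = (-lam)^K := by
        rw [← pow_add]; congr 1; omega
      calc ((-lam)^i * (K.descFactorial i : f)) * (((K-i).factorial : f) * (-lam)^(K-i))
          = (((K-i).factorial : f) * (K.descFactorial i : f)) * ((-lam)^i * (-lam)^(K-i)) := by
            ring
        _ = (K.factorial : f) * (-lam)^K := by rw [hfc, hpow]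
    have key : (C ((-lam)^i * (K.descFactorial i : f)) : MvPolynomial ℕ f) *
        C (((K-i).factorial : f) * (-lam)^(K-i)) = C ((K.factorial : f) * (-lam)^K) := by
      rw [← map_mul, hscal]
    linear_combination (X 0^i * X (m+1+i) * Rr (-lam⁻¹ - 1) (K-i)) * key
  rw [Finset.sum_congr rfl hterm, ← Finset.mul_sum, ← mul_assoc, ← map_mul]
  have hconst : (((K.factorial : f) * (-lam)^(K+1))⁻¹) * ((K.factorial : f) * (-lam)^K)
      = -lam⁻¹ := by
    have h1 : (K.factorial : f) ≠ 0 := Nat.cast_ne_zero.2 (Nat.factorial_ne_zero K)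
    have h2 : (-lam : f) ≠ 0 := neg_ne_zero.2 hlam
    rw [pow_succ]
    field_simp
  rw [hconst, Finset.mul_sum]
  have hexp2 : ∀ i ∈ Finset.range (K+1),
      (C (-lam⁻¹) : MvPolynomial ℕ f) * (X 0^i * X (m+1+i) * Rr (-lam⁻¹ - 1) (K-i))
      = ∑ μ ∈ PFin (K-i), C (-lam⁻¹) * (X 0^i * X (m+1+i) * Rterm (-lam⁻¹ - 1) (K-i) μ) := by
    intro i hi
    rw [Rr, Finset.mul_sum, Finset.mul_sum]
  rw [Finset.sum_congr rfl hexp2,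
    ← Finset.sum_sigma (Finset.range (K+1)) (fun i => PFin (K-i))
      (fun p => (C (-lam⁻¹) : MvPolynomial ℕ f) *
        (X 0 ^ p.1 * X (m+1+p.1) * Rterm (-lam⁻¹ - 1) (K-p.1) p.2))]
  rw [Ppoly_eq_multiset]
  exact assemble (-lam⁻¹) hKm

end Main

end
end

section
/- Let m ≥ 0 and k ≥ 1, and let P_{mk} := P^{(1/2)}_{mk} ∈ ℚ[x_0,…,x_{m+k}]. Then the least common multiple of the denominators of the coefficients of P_{mk} (equivalently, the smallest positive integer N such that N·P_{mk} has integer coefficients) equals 2^{2k − s(k)} if m = 0, and equals 2^{2k − s(k−1) − 1} if m ≥ 1, where s(j) denotes the sum of the digits of the binary expansion of j. -/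
open Finset

lemma v2_fact_add_s (n : ℕ) : padicValNat 2 n.factorial + (Nat.digits 2 n).sum = n := by
  have h := Nat.digit_sum_le 2 n
  have h2 := sub_one_mul_padicValNat_factorial (p := 2) n
  omega

lemma v2_le_of_dvd {a b : ℕ} (hb : b ≠ 0) (h : a ∣ b) :
    padicValNat 2 a ≤ padicValNat 2 b := by
  obtain ⟨c, rfl⟩ := h
  have ha : a ≠ 0 := by rintro rfl; simp at hb
  have hc : c ≠ 0 := by rintro rfl; simp at hb
  rw [padicValNat.mul ha hc]; omega

lemma s2_add_le (a b : ℕ) : (Nat.digits 2 (a+b)).sum ≤ (Nat.digits 2 a).sum + (Nat.digits 2 b).sum := by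
  have hd : a.factorial * b.factorial ∣ (a+b).factorial :=
    Nat.factorial_mul_factorial_dvd_factorial_add a b
  have hv := v2_le_of_dvd (Nat.factorial_ne_zero (a+b)) hd
  rw [padicValNat.mul (Nat.factorial_ne_zero a) (Nat.factorial_ne_zero b)] at hv
  have := v2_fact_add_s a
  have := v2_fact_add_s b
  have := v2_fact_add_s (a+b)
  omega

lemma s2_sum_le {ι : Type*} (I : Finset ι) (f : ι → ℕ) :
    (Nat.digits 2 (∑ i ∈ I, f i)).sum ≤ ∑ i ∈ I, (Nat.digits 2 (f i)).sum := by
  classical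
  induction I using Finset.induction with
  | empty => simp
  | @insert a I h ih =>
    rw [Finset.sum_insert h, Finset.sum_insert h]
    exact le_trans (s2_add_le _ _) (by omega)

lemma s2_mul_le (c b : ℕ) : (Nat.digits 2 (c*b)).sum ≤ (Nat.digits 2 b).sum + (c-1)*b := by
  induction c with
  | zero => simp
  | succ c ih =>
    rcases Nat.eq_zero_or_pos c with rfl | hc
    · simp
    have h1 : (c+1)*b = c*b + b := by ring
    have h3 := Nat.digit_sum_le 2 b
    have h4 : (c-1)*b + b = c * b := by
      obtain ⟨d, rfl⟩ := Nat.exists_eq_add_of_le hc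
      simp only [Nat.add_sub_cancel, Nat.one_add, Nat.succ_sub_one]
      rw [Nat.succ_mul, Nat.mul_comm]
    rw [Nat.add_sub_cancel, h1]
    calc (Nat.digits 2 (c*b + b)).sum ≤ (Nat.digits 2 (c*b)).sum + (Nat.digits 2 b).sum := s2_add_le _ _
      _ ≤ ((Nat.digits 2 b).sum + (c-1)*b) + (Nat.digits 2 b).sum := by omega
      _ ≤ (Nat.digits 2 b).sum + ((c-1)*b + b) := by omega
      _ = (Nat.digits 2 b).sum + c*b := by rw [h4]

lemma s2_pos {n : ℕ} (hn : n ≠ 0) : 1 ≤ (Nat.digits 2 n).sum := by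
  induction n using Nat.strong_induction_on with
  | _ n ih =>
    rw [Nat.digits_def' one_lt_two (Nat.pos_of_ne_zero hn)]
    rcases Nat.eq_zero_or_pos (n % 2) with h | h
    · have h2 : n / 2 ≠ 0 := by omega
      have := ih (n/2) (by omega) h2
      simp; omega
    · simp; omega

def oddP (t : ℕ) : ℕ := ∏ j ∈ Finset.range t, (2*j+1)

lemma oddP_odd (t : ℕ) : Odd (oddP t) := by
  induction t with
  | zero => simp [oddP]
  | succ t ih =>
    rw [oddP, Finset.prod_range_succ]
    exact ih.mul ⟨t, by ring⟩

lemma prod_half_sub (t : ℕ) :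
    ∏ j ∈ Finset.range (t+1), ((1/2 : ℚ) - j) = (-1)^t * (oddP t) / 2^(t+1) := by
  induction t with
  | zero => simp [oddP]
  | succ t ih =>
    rw [Finset.prod_range_succ, ih]
    simp only [oddP, Finset.prod_range_succ]
    push_cast
    field_simp
    ring

lemma prod_half_sub_catalan (t : ℕ) :
    ∏ j ∈ Finset.range (t+1), ((1/2 : ℚ) - j) =
      (-1)^t * (catalan t * (t+1).factorial) / 2^(2*t+1) := by
  induction t with
  | zero => simp
  | succ t ih =>
    have h1 : (t+2) * catalan (t+1) = Nat.centralBinom (t+1) :=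
      succ_mul_catalan_eq_centralBinom (t+1)
    have h2 : (t+1) * catalan t = Nat.centralBinom t :=
      succ_mul_catalan_eq_centralBinom t
    have h3 : (t+1) * Nat.centralBinom (t+1) = 2 * (2*t+1) * Nat.centralBinom t :=
      Nat.succ_mul_centralBinom_succ t
    have e1 : (t+1+1).factorial = (t+2) * (t+1).factorial := rfl
    have hnat : (t+1) * (catalan (t+1) * (t+1+1).factorial) =
        2 * (2*t+1) * ((t+1) * (catalan t * (t+1).factorial)) := by
      calc (t+1) * (catalan (t+1) * (t+1+1).factorial)
          = ((t+2) * catalan (t+1)) * ((t+1) * (t+1).factorial) := by rw [e1]; ring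
        _ = Nat.centralBinom (t+1) * ((t+1) * (t+1).factorial) := by rw [h1]
        _ = ((t+1) * Nat.centralBinom (t+1)) * (t+1).factorial := by ring
        _ = (2 * (2*t+1) * Nat.centralBinom t) * (t+1).factorial := by rw [h3]
        _ = (2 * (2*t+1)) * (((t+1) * catalan t) * (t+1).factorial) := by rw [h2]; ring
        _ = 2 * (2*t+1) * ((t+1) * (catalan t * (t+1).factorial)) := by ring
    have hq : ((t:ℚ)+1) * (catalan (t+1) * ((t+1+1).factorial : ℕ)) =
        2 * (2*(t:ℚ)+1) * (((t:ℚ)+1) * (catalan t * ((t+1).factorial : ℕ))) := by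
      exact_mod_cast congrArg (Nat.cast : ℕ → ℚ) hnat
    rw [Finset.prod_range_succ, ih]
    have ht1 : ((t:ℚ)+1) ≠ 0 := by positivity
    push_cast
    push_cast at hq
    have hq2 : ((catalan (t+1) : ℚ)) * ((t+1+1).factorial : ℕ) =
        2*(2*(t:ℚ)+1)*((catalan t : ℚ) * ((t+1).factorial : ℕ)) :=
      mul_left_cancel₀ ht1 (by push_cast; linear_combination hq)
    push_cast at hq2
    rw [hq2]
    field_simp
    ring

lemma v2_prod {ι : Type*} (I : Finset ι) (f : ι → ℕ) (hf : ∀ i ∈ I, f i ≠ 0) :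
    padicValNat 2 (∏ i ∈ I, f i) = ∑ i ∈ I, padicValNat 2 (f i) := by
  classical
  induction I using Finset.induction with
  | empty => simp
  | @insert a I h ih =>
    rw [Finset.prod_insert h, Finset.sum_insert h,
      padicValNat.mul (hf a (Finset.mem_insert_self a I))
        (Finset.prod_ne_zero_iff.mpr fun i hi => hf i (Finset.mem_insert_of_mem hi)),
      ih (fun i hi => hf i (Finset.mem_insert_of_mem hi))]

lemma catalan_mul_factorial (t : ℕ) : catalan t * (t+1).factorial = oddP t * 2^t := by
  have h := (prod_half_sub t).symm.trans (prod_half_sub_catalan t)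
  rw [mul_div_assoc, mul_div_assoc] at h
  have e1 : ((-1:ℚ))^t ≠ 0 := by
    simp [pow_ne_zero]
  have h' := mul_left_cancel₀ e1 h
  rw [div_eq_div_iff (by positivity) (by positivity)] at h'
  have h2 : ((catalan t * (t+1).factorial : ℕ) : ℚ) * 2^(t+1) =
      ((oddP t * 2^t : ℕ) : ℚ) * 2^(t+1) := by
    push_cast
    rw [show 2*t+1 = t + (t+1) by ring, pow_add] at h'
    push_cast at h'
    linear_combination - h' 
  have := mul_right_cancel₀ (by positivity : ((2:ℚ))^(t+1) ≠ 0) h2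
  exact_mod_cast this

lemma parts_mem_Icc {n : ℕ} (π : Nat.Partition n) {i : ℕ} (hi : i ∈ π.parts) :
    i ∈ Finset.Icc 1 n := by
  rw [Finset.mem_Icc]
  refine ⟨π.parts_pos hi, ?_⟩
  calc i ≤ π.parts.sum := Multiset.single_le_sum (fun x _ => Nat.zero_le x) i hi
    _ = n := π.parts_sum

lemma sum_count_parts {n : ℕ} (π : Nat.Partition n) :
    ∑ i ∈ Finset.Icc 1 n, π.parts.count i = Multiset.card π.parts :=
  Multiset.sum_count_eq_card (fun a ha => parts_mem_Icc π ha)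

lemma sum_mul_count_parts {n : ℕ} (π : Nat.Partition n) :
    ∑ i ∈ Finset.Icc 1 n, i * π.parts.count i = n := by
  classical
  have h1 : (π.parts.map id).sum = ∑ m ∈ π.parts.toFinset, π.parts.count m • id m :=
    Finset.sum_multiset_map_count _ _
  rw [Multiset.map_id, π.parts_sum] at h1
  conv_rhs => rw [h1]
  rw [← Finset.sum_subset (fun x hx => parts_mem_Icc π (Multiset.mem_toFinset.mp hx))]
  · exact Finset.sum_congr rfl fun i _ => by rw [smul_eq_mul, mul_comm]; rfl
  · intro x _ hx
    rw [Multiset.count_eq_zero_of_notMem (fun h => hx (Multiset.mem_toFinset.mpr h))]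
    simp

lemma exists_odd_part {N : ℕ} (h : N ≠ 0) :
    ∃ u, N = 2 ^ padicValNat 2 N * u ∧ ¬ 2 ∣ u := by
  haveI : Fact (Nat.Prime 2) := ⟨Nat.prime_two⟩
  refine ⟨N / 2 ^ padicValNat 2 N, (Nat.mul_div_cancel' pow_padicValNat_dvd).symm, ?_⟩
  rintro ⟨c, hc⟩
  refine pow_succ_padicValNat_not_dvd h (p := 2) ⟨c, ?_⟩
  conv_lhs => rw [← Nat.mul_div_cancel' (pow_padicValNat_dvd (p := 2) (n := N)), hc]
  ring

open scoped Classical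

noncomputable section

lemma partMultCoeff_half {n : ℕ} (π : Nat.Partition n) (hne : π.parts ≠ 0) :
    (partMultCoeff (1/2 : ℚ) π).den =
      2 ^ (2 * Multiset.card π.parts
            - ∑ i ∈ Finset.Icc 1 n, (Nat.digits 2 (π.parts.count i)).sum) ∧
    partMultCoeff (1/2 : ℚ) π ≠ 0 := by
  haveI : Fact (Nat.Prime 2) := ⟨Nat.prime_two⟩
  set S : ℕ := ∑ i ∈ Finset.Icc 1 n, (Nat.digits 2 (π.parts.count i)).sum with hS
  set F : ℕ := ∏ i ∈ Finset.Icc 1 n, (π.parts.count i).factorial with hF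
  obtain ⟨t, ht⟩ : ∃ t, Multiset.card π.parts = t + 1 := by
    have := Multiset.card_pos.mpr hne
    exact ⟨Multiset.card π.parts - 1, by omega⟩
  have hcount : ∑ i ∈ Finset.Icc 1 n, π.parts.count i = t + 1 := by
    rw [sum_count_parts π, ht]
  have hF0 : F ≠ 0 := by
    rw [hF]
    exact Finset.prod_ne_zero_iff.mpr fun i _ => Nat.factorial_ne_zero _
  have hFdvd : F ∣ (t+1).factorial := by
    rw [hF, ← hcount]
    exact Nat.prod_factorial_dvd_factorial_sum _ _
  set M : ℕ := (t+1).factorial / F with hM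
  have hFM : F * M = (t+1).factorial := Nat.mul_div_cancel' hFdvd
  set N : ℕ := catalan t * M with hN
  have hNF : N * F = oddP t * 2^t := by
    rw [hN, mul_assoc, mul_comm M F, hFM, catalan_mul_factorial]
  have hoP : oddP t ≠ 0 := by
    intro h
    have := oddP_odd t
    rw [h] at this
    exact (Nat.not_odd_iff_even.mpr Even.zero) this
  have hN0 : N ≠ 0 := by
    have h0 : oddP t * 2^t ≠ 0 := Nat.mul_ne_zero hoP (pow_ne_zero _ two_ne_zero)
    intro h
    apply h0
    rw [← hNF, h, zero_mul]
  have hvNF : padicValNat 2 N + padicValNat 2 F = t := by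
    rw [← padicValNat.mul hN0 hF0, hNF,
      padicValNat.mul hoP (pow_ne_zero _ two_ne_zero),
      padicValNat.eq_zero_of_not_dvd (by
        have := oddP_odd t
        rw [Nat.odd_iff] at this
        omega),
      padicValNat.prime_pow, zero_add]
  have hvF : padicValNat 2 F + S = t + 1 := by
    rw [hF, v2_prod _ _ (fun i _ => Nat.factorial_ne_zero _), hS,
      ← Finset.sum_add_distrib, ← hcount]
    exact Finset.sum_congr rfl fun i _ => v2_fact_add_s _
  obtain ⟨u, hu, hu2⟩ := exists_odd_part hN0
  obtain ⟨v, hv⟩ : ∃ v, padicValNat 2 N = v := ⟨_, rfl⟩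
  rw [hv] at hu
  rw [hv] at hvNF
  have hvS : v + 1 = S := by omega
  have hu0 : u ≠ 0 := by rintro rfl; rw [mul_zero] at hu; exact hN0 hu
  -- rational expression
  have hq : partMultCoeff (1/2 : ℚ) π =
      (((-1 : ℤ)^t * u : ℤ) : ℚ) / ((2^(2*(t+1) - S) : ℕ) : ℚ) := by
    rw [partMultCoeff, ht]
    have hnum : ∏ j ∈ Finset.range (t+1), ((1/2 : ℚ) - j) =
        (-1)^t * (catalan t * (t+1).factorial) / 2^(2*t+1) := prod_half_sub_catalan t
    have hden : (∏ i ∈ Finset.Icc 1 n, (((π.parts.count i).factorial : ℚ))) = (F : ℚ) := by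
      rw [hF]; push_cast; rfl
    rw [hnum, hden]
    have hNFQ : ((catalan t : ℚ)) * ((t+1).factorial : ℕ) = (N : ℚ) * (F : ℚ) := by
      have : catalan t * (t+1).factorial = N * F := by
        rw [hN, mul_assoc, mul_comm M F, hFM]
      exact_mod_cast congrArg (Nat.cast : ℕ → ℚ) this
    have hNQ : (N : ℚ) = 2^v * u := by exact_mod_cast congrArg (Nat.cast : ℕ → ℚ) hu
    have hF0Q : (F : ℚ) ≠ 0 := Nat.cast_ne_zero.mpr hF0
    have hc1 : v ≤ 2*t+1 := by omega
    have hc2 : (2:ℚ)^(2*t+1) = 2^(2*(t+1)-S) * 2^v := by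
      rw [← pow_add]
      congr 1
      omega
    push_cast
    rw [hNFQ, hNQ, hc2]
    field_simp
  have hbpos : (0:ℤ) < ((2:ℤ))^(2*(t+1)-S) := by positivity
  have hcop : Nat.Coprime ((-1 : ℤ)^t * u).natAbs (((2:ℤ)^(2*(t+1)-S)).natAbs) := by
    have h1 : ((-1 : ℤ)^t * u).natAbs = u := by
      rw [Int.natAbs_mul, Int.natAbs_pow]
      simp
    have h2 : (((2:ℤ))^(2*(t+1)-S)).natAbs = 2^(2*(t+1)-S) := by
      rw [Int.natAbs_pow]; rfl
    rw [h1, h2]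
    exact Nat.Coprime.pow_right _ (Nat.coprime_two_right.mpr (Nat.odd_iff.mpr (by omega)))
  constructor
  · have hden := Rat.den_div_eq_of_coprime hbpos hcop
    rw [ht]
    have : (((-1 : ℤ)^t * u : ℤ) : ℚ) / (((2:ℤ)^(2*(t+1)-S) : ℤ) : ℚ)
        = partMultCoeff (1/2 : ℚ) π := by
      rw [hq]; push_cast; ring
    rw [this] at hden
    exact_mod_cast hden
  · rw [hq]
    apply div_ne_zero
    · simp [hu0]
    · positivity

def pdeg (m k : ℕ) (π : Nat.Partition (m + k)) : ℕ →₀ ℕ :=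
  Finsupp.single 0 (k - Multiset.card π.parts) +
    ∑ i ∈ Finset.Icc 1 (m + k), Finsupp.single i (π.parts.count i)

lemma prod_X_pow_mono (I : Finset ℕ) (f : ℕ → ℕ) :
    ∏ i ∈ I, (MvPolynomial.X i : MvPolynomial ℕ ℚ) ^ f i =
      MvPolynomial.monomial (∑ i ∈ I, Finsupp.single i (f i)) (1 : ℚ) := by
  classical
  induction I using Finset.induction with
  | empty => simp
  | @insert a I h ih =>
    rw [Finset.prod_insert h, Finset.sum_insert h, ih, MvPolynomial.X_pow_eq_monomial,
      MvPolynomial.monomial_mul, mul_one]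

lemma term_eq_monomial (m k : ℕ) (π : Nat.Partition (m + k)) (c : ℚ) :
    MvPolynomial.C (partMultCoeff c π) *
        MvPolynomial.X 0 ^ (k - Multiset.card π.parts) *
        ∏ i ∈ Finset.Icc 1 (m + k), MvPolynomial.X i ^ (π.parts.count i) =
      MvPolynomial.monomial (pdeg m k π) (partMultCoeff c π) := by
  rw [MvPolynomial.C_mul_X_pow_eq_monomial, prod_X_pow_mono,
    MvPolynomial.monomial_mul, mul_one, pdeg]

lemma pdeg_apply (m k : ℕ) (π : Nat.Partition (m + k)) {i : ℕ}
    (hi : i ∈ Finset.Icc 1 (m + k)) : pdeg m k π i = π.parts.count i := by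
  classical
  rw [pdeg, Finsupp.add_apply, Finsupp.single_apply,
    if_neg (by rw [Finset.mem_Icc] at hi; omega), Finset.sum_apply']
  rw [Finset.sum_eq_single (f := fun b => (Finsupp.single b (π.parts.count b)) i) i (fun b _ hb => Finsupp.single_eq_of_ne' hb)
    (fun h => absurd hi h)]
  simp

lemma pdeg_inj (m k : ℕ) (π π' : Nat.Partition (m + k))
    (h : pdeg m k π = pdeg m k π') : π = π' := by
  ext i
  by_cases hi : i ∈ Finset.Icc 1 (m + k)
  · rw [← pdeg_apply m k π hi, ← pdeg_apply m k π' hi, h]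
  · rw [Multiset.count_eq_zero_of_notMem (fun hm => hi (parts_mem_Icc π hm)),
      Multiset.count_eq_zero_of_notMem (fun hm => hi (parts_mem_Icc π' hm))]

lemma coeff_Ppoly (m k : ℕ) (c : ℚ)
    (π₀ : Nat.Partition (m + k))
    (h₀ : π₀ ∈ Finset.univ.filter (fun π : Nat.Partition (m + k) => ∃ a ∈ π.parts, m < a)) :
    (Ppoly ℚ c m k).coeff (pdeg m k π₀) = partMultCoeff c π₀ := by
  classical
  rw [Ppoly, MvPolynomial.coeff_sum]
  rw [Finset.sum_eq_single π₀]
  · rw [term_eq_monomial, MvPolynomial.coeff_monomial, if_pos rfl]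
  · intro π hπ hne
    rw [term_eq_monomial, MvPolynomial.coeff_monomial,
      if_neg (fun h => hne (pdeg_inj m k π π₀ h))]
  · intro h
    exact absurd h₀ h

lemma support_Ppoly (m k : ℕ) (c : ℚ) :
    (Ppoly ℚ c m k).support ⊆
      (Finset.univ.filter (fun π : Nat.Partition (m + k) => ∃ a ∈ π.parts, m < a)).image
        (pdeg m k) := by
  classical
  rw [Ppoly]
  refine subset_trans MvPolynomial.support_sum ?_
  intro d hd
  rw [Finset.mem_biUnion] at hd
  obtain ⟨π, hπ, hdπ⟩ := hd
  rw [MvPolynomial.mem_support_iff, term_eq_monomial, MvPolynomial.coeff_monomial] at hdπ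
  rw [Finset.mem_image]
  refine ⟨π, hπ, ?_⟩
  by_contra hne
  rw [if_neg hne] at hdπ
  exact hdπ rfl

lemma S_le_card {n : ℕ} (π : Nat.Partition n) :
    ∑ i ∈ Finset.Icc 1 n, (Nat.digits 2 (π.parts.count i)).sum ≤ Multiset.card π.parts := by
  rw [← sum_count_parts π]
  exact Finset.sum_le_sum fun i _ => Nat.digit_sum_le 2 _

lemma T_add_card {n : ℕ} (π : Nat.Partition n) :
    (∑ i ∈ Finset.Icc 1 n, (i-1) * π.parts.count i) + Multiset.card π.parts = n := by
  conv_rhs => rw [← sum_mul_count_parts π]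
  rw [← sum_count_parts π, ← Finset.sum_add_distrib]
  refine Finset.sum_congr rfl fun i hi => ?_
  rw [Finset.mem_Icc] at hi
  obtain ⟨j, rfl⟩ := Nat.exists_eq_add_of_le hi.1
  simp only [Nat.add_sub_cancel_left]
  ring

lemma sk_bound {n : ℕ} (π : Nat.Partition n) :
    (Nat.digits 2 n).sum ≤
      (∑ i ∈ Finset.Icc 1 n, (Nat.digits 2 (π.parts.count i)).sum) +
        ∑ i ∈ Finset.Icc 1 n, (i-1) * π.parts.count i := by
  calc (Nat.digits 2 n).sum
      = (Nat.digits 2 (∑ i ∈ Finset.Icc 1 n, i * π.parts.count i)).sum := by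
        rw [sum_mul_count_parts π]
    _ ≤ ∑ i ∈ Finset.Icc 1 n, (Nat.digits 2 (i * π.parts.count i)).sum := s2_sum_le _ _
    _ ≤ ∑ i ∈ Finset.Icc 1 n,
          ((Nat.digits 2 (π.parts.count i)).sum + (i-1) * π.parts.count i) :=
        Finset.sum_le_sum fun i _ => s2_mul_le _ _
    _ = _ := Finset.sum_add_distrib

/-- Case m ≥ 1 bound. -/
lemma Ebound1 {m k : ℕ} (hm : 1 ≤ m) (π : Nat.Partition (m + k))
    {a : ℕ} (ha : a ∈ π.parts) (ham : m < a) :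
    (Nat.digits 2 (k-1)).sum + 1 + 2 * Multiset.card π.parts ≤
      2 * k + ∑ i ∈ Finset.Icc 1 (m+k), (Nat.digits 2 (π.parts.count i)).sum := by
  classical
  set I := Finset.Icc 1 (m+k) with hI
  have haI : a ∈ I := parts_mem_Icc π ha
  have hpa : 1 ≤ π.parts.count a := Multiset.one_le_count_iff_mem.mpr ha
  -- erase splits
  have hSsplit : ∑ i ∈ I, (Nat.digits 2 ((π.parts.count i))).sum =
      (Nat.digits 2 ((π.parts.count a))).sum + ∑ i ∈ I.erase a, (Nat.digits 2 ((π.parts.count i))).sum :=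
    (Finset.add_sum_erase I _ haI).symm
  have hTsplit : ∑ i ∈ I, (i-1) * (π.parts.count i) =
      (a-1) * (π.parts.count a) + ∑ i ∈ I.erase a, (i-1) * (π.parts.count i) :=
    (Finset.add_sum_erase I _ haI).symm
  have hKsplit : ∑ i ∈ I, i * (π.parts.count i) = a * (π.parts.count a) + ∑ i ∈ I.erase a, i * (π.parts.count i) :=
    (Finset.add_sum_erase I _ haI).symm
  have hK : ∑ i ∈ I, i * (π.parts.count i) = m + k := sum_mul_count_parts π
  have hT : (∑ i ∈ I, (i-1) * (π.parts.count i)) + Multiset.card π.parts = m + k := T_add_card π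
  have ha_le : a ≤ a * (π.parts.count a) := Nat.le_mul_of_pos_right _ (by omega)
  -- abbreviations
  set S' := ∑ i ∈ I.erase a, (Nat.digits 2 ((π.parts.count i))).sum with hS'
  set T' := ∑ i ∈ I.erase a, (i-1) * (π.parts.count i) with hT'
  set K' := ∑ i ∈ I.erase a, i * (π.parts.count i) with hK'
  have hapa : a * (π.parts.count a) = a + a * ((π.parts.count a) - 1) := by
    obtain ⟨q, hq⟩ := Nat.exists_eq_add_of_le hpa
    rw [hq]
    simp only [Nat.add_sub_cancel_left]
    ring
  have hZY : (a-1) * (π.parts.count a) = (a-1) * ((π.parts.count a) - 1) + (a-1) := by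
    obtain ⟨q, hq⟩ := Nat.exists_eq_add_of_le hpa
    rw [hq]
    simp only [Nat.add_sub_cancel_left]
    ring
  have hZ1 : m + (π.parts.count a) ≤ (a-1) * (π.parts.count a) + 1 := by
    have h1 : m * (π.parts.count a) ≤ (a-1) * (π.parts.count a) := Nat.mul_le_mul_right _ (by omega)
    have h2 : m + (π.parts.count a) ≤ m * (π.parts.count a) + 1 := by
      obtain ⟨q, hq⟩ := Nat.exists_eq_add_of_le hpa
      obtain ⟨r, hr⟩ := Nat.exists_eq_add_of_le hm
      rw [hq, hr]
      nlinarith []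
    omega
  -- decomposition of k - 1
  have hk1 : k - 1 = (a - m - 1) + (a * ((π.parts.count a) - 1) + K') := by omega
  -- digit sum bound
  have hs1 : (Nat.digits 2 (k-1)).sum ≤
      (a - m - 1) + ((Nat.digits 2 ((π.parts.count a) - 1)).sum + (a-1)*((π.parts.count a) - 1)) + (S' + T') := by
    rw [hk1]
    calc (Nat.digits 2 ((a - m - 1) + (a * ((π.parts.count a) - 1) + K'))).sum
        ≤ (Nat.digits 2 (a-m-1)).sum + (Nat.digits 2 (a * ((π.parts.count a) - 1) + K')).sum :=
          s2_add_le _ _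
      _ ≤ (Nat.digits 2 (a-m-1)).sum + ((Nat.digits 2 (a * ((π.parts.count a) - 1))).sum
            + (Nat.digits 2 K').sum) := by
          have := s2_add_le (a * ((π.parts.count a) - 1)) K'
          omega
      _ ≤ (a - m - 1) + ((Nat.digits 2 ((π.parts.count a) - 1)).sum + (a-1)*((π.parts.count a) - 1)) + (S' + T') := by
          have h1 := Nat.digit_sum_le 2 (a-m-1)
          have h2 := s2_mul_le a ((π.parts.count a) - 1)
          have h3 : (Nat.digits 2 K').sum ≤ S' + T' := by
            rw [hK']
            calc (Nat.digits 2 (∑ i ∈ I.erase a, i * (π.parts.count i))).sum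
                ≤ ∑ i ∈ I.erase a, (Nat.digits 2 (i * (π.parts.count i))).sum := s2_sum_le _ _
              _ ≤ ∑ i ∈ I.erase a, ((Nat.digits 2 ((π.parts.count i))).sum + (i-1) * (π.parts.count i)) :=
                  Finset.sum_le_sum fun i _ => s2_mul_le _ _
              _ = S' + T' := by rw [hS', hT', Finset.sum_add_distrib]
          omega
  have hspa1 : (Nat.digits 2 ((π.parts.count a) - 1)).sum ≤ (π.parts.count a) - 1 := Nat.digit_sum_le 2 _
  have hspa : 1 ≤ (Nat.digits 2 ((π.parts.count a))).sum := s2_pos (by omega)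
  omega

lemma exists_ext0 (k : ℕ) (hk : 1 ≤ k) :
    ∃ π : Nat.Partition (0+k), (∃ a ∈ π.parts, 0 < a) ∧ Multiset.card π.parts = k ∧
      (∑ i ∈ Finset.Icc 1 (0+k), (Nat.digits 2 (π.parts.count i)).sum) =
        (Nat.digits 2 k).sum := by
  refine ⟨⟨Multiset.replicate k 1, ?_, ?_⟩, ?_, ?_, ?_⟩
  · intro i hi
    rw [Multiset.eq_of_mem_replicate hi]
    omega
  · rw [Multiset.sum_replicate, smul_eq_mul, mul_one]
    omega
  · exact ⟨1, Multiset.mem_replicate.mpr ⟨by omega, rfl⟩, one_pos⟩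
  · simp
  · rw [Finset.sum_eq_single_of_mem 1 (by rw [Finset.mem_Icc]; omega)]
    · rw [Multiset.count_replicate, if_pos rfl]
    · intro b _ hb
      rw [Multiset.count_replicate, if_neg (by omega : ¬ (1:ℕ) = b)]
      simp

lemma exists_ext1 (m k : ℕ) (hm : 1 ≤ m) (hk : 1 ≤ k) :
    ∃ π : Nat.Partition (m+k), (∃ a ∈ π.parts, m < a) ∧ Multiset.card π.parts = k ∧
      (∑ i ∈ Finset.Icc 1 (m+k), (Nat.digits 2 (π.parts.count i)).sum) =
        (Nat.digits 2 (k-1)).sum + 1 := by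
  classical
  refine ⟨⟨(m+1) ::ₘ Multiset.replicate (k-1) 1, ?_, ?_⟩, ?_, ?_, ?_⟩
  · intro i hi
    rcases Multiset.mem_cons.mp hi with h | h
    · omega
    · rw [Multiset.eq_of_mem_replicate h]; omega
  · rw [Multiset.sum_cons, Multiset.sum_replicate, smul_eq_mul, mul_one]
    omega
  · refine ⟨m+1, ?_, by omega⟩
    show m+1 ∈ (m+1) ::ₘ Multiset.replicate (k-1) 1
    exact Multiset.mem_cons_self _ _
  · simp; omega
  · have h1mem : (1:ℕ) ∈ Finset.Icc 1 (m+k) := by rw [Finset.mem_Icc]; omega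
    have hm1mem : m+1 ∈ (Finset.Icc 1 (m+k)).erase 1 := by
      rw [Finset.mem_erase, Finset.mem_Icc]; omega
    rw [← Finset.add_sum_erase _ _ h1mem, ← Finset.add_sum_erase _ _ hm1mem]
    have hc1 : Multiset.count 1 ((m+1) ::ₘ Multiset.replicate (k-1) 1) = k - 1 := by
      rw [Multiset.count_cons, Multiset.count_replicate]
      split_ifs <;> omega
    have hcm : Multiset.count (m+1) ((m+1) ::ₘ Multiset.replicate (k-1) 1) = 1 := by
      rw [Multiset.count_cons, Multiset.count_replicate]
      split_ifs <;> omega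
    rw [hc1, hcm]
    have hrest : ∑ i ∈ ((Finset.Icc 1 (m+k)).erase 1).erase (m+1),
        (Nat.digits 2 (Multiset.count i ((m+1) ::ₘ Multiset.replicate (k-1) 1))).sum = 0 := by
      refine Finset.sum_eq_zero fun i hi => ?_
      rw [Finset.mem_erase, Finset.mem_erase] at hi
      have hz : Multiset.count i ((m+1) ::ₘ Multiset.replicate (k-1) 1) = 0 := by
        rw [Multiset.count_cons, Multiset.count_replicate]
        split_ifs <;> omega
      rw [hz]
      simp
    rw [hrest]
    norm_num [Nat.add_comm]

/-- The least common multiple of the denominators of the coefficients of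
`P_{mk} = P^{(1/2)}_{mk}` equals `2^(2k − s(k))` if `m = 0`, and `2^(2k − s(k−1) − 1)` if
`m ≥ 1`, where `s(j)` is the sum of the binary digits of `j`. -/
theorem lcm_den_Ppoly_half (m k : ℕ) (hk : 1 ≤ k) :
    (m = 0 →
      (Ppoly ℚ (1/2 : ℚ) m k).support.lcm
          (fun d => ((Ppoly ℚ (1/2 : ℚ) m k).coeff d).den) =
        2 ^ (2 * k - (Nat.digits 2 k).sum)) ∧
    (1 ≤ m →
      (Ppoly ℚ (1/2 : ℚ) m k).support.lcm
          (fun d => ((Ppoly ℚ (1/2 : ℚ) m k).coeff d).den) =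
        2 ^ (2 * k - (Nat.digits 2 (k - 1)).sum - 1)) := by
  constructor
  · rintro rfl
    apply Nat.dvd_antisymm
    · apply Finset.lcm_dvd
      intro d hd
      obtain ⟨π, hπ, rfl⟩ := Finset.mem_image.mp (support_Ppoly 0 k (1/2 : ℚ) hd)
      rw [coeff_Ppoly 0 k (1/2 : ℚ) π hπ]
      obtain ⟨a, haparts, _⟩ := (Finset.mem_filter.mp hπ).2
      have hne : π.parts ≠ 0 := fun h => by rw [h] at haparts; simp at haparts
      rw [(partMultCoeff_half π hne).1]
      apply pow_dvd_pow
      have hB := sk_bound π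
      have hT := T_add_card π
      have hSL := S_le_card π
      have hz : (Nat.digits 2 (0+k)).sum = (Nat.digits 2 k).sum := by rw [Nat.zero_add]
      omega
    · obtain ⟨π, hfil, hcard, hSval⟩ := exists_ext0 k hk
      have hπ : π ∈ Finset.univ.filter
          (fun π : Nat.Partition (0 + k) => ∃ a ∈ π.parts, 0 < a) :=
        Finset.mem_filter.mpr ⟨Finset.mem_univ _, hfil⟩
      obtain ⟨a, haparts, _⟩ := hfil
      have hne : π.parts ≠ 0 := fun h => by rw [h] at haparts; simp at haparts
      have hco := coeff_Ppoly 0 k (1/2 : ℚ) π hπ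
      have hd : pdeg 0 k π ∈ (Ppoly ℚ (1/2 : ℚ) 0 k).support :=
        MvPolynomial.mem_support_iff.mpr
          (by rw [hco]; exact (partMultCoeff_half π hne).2)
      have hdv := Finset.dvd_lcm (f := fun d => ((Ppoly ℚ (1/2 : ℚ) 0 k).coeff d).den) hd
      rw [hco, (partMultCoeff_half π hne).1, hcard, hSval] at hdv
      exact hdv
  · intro hm
    apply Nat.dvd_antisymm
    · apply Finset.lcm_dvd
      intro d hd
      obtain ⟨π, hπ, rfl⟩ := Finset.mem_image.mp (support_Ppoly m k (1/2 : ℚ) hd)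
      rw [coeff_Ppoly m k (1/2 : ℚ) π hπ]
      obtain ⟨a, haparts, ha⟩ := (Finset.mem_filter.mp hπ).2
      have hne : π.parts ≠ 0 := fun h => by rw [h] at haparts; simp at haparts
      rw [(partMultCoeff_half π hne).1]
      apply pow_dvd_pow
      have hB := Ebound1 hm π haparts ha
      have hSL := S_le_card π
      omega
    · obtain ⟨π, hfil, hcard, hSval⟩ := exists_ext1 m k hm hk
      have hπ : π ∈ Finset.univ.filter
          (fun π : Nat.Partition (m + k) => ∃ a ∈ π.parts, m < a) :=
        Finset.mem_filter.mpr ⟨Finset.mem_univ _, hfil⟩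
      obtain ⟨a, haparts, _⟩ := hfil
      have hne : π.parts ≠ 0 := fun h => by rw [h] at haparts; simp at haparts
      have hco := coeff_Ppoly m k (1/2 : ℚ) π hπ
      have hd : pdeg m k π ∈ (Ppoly ℚ (1/2 : ℚ) m k).support :=
        MvPolynomial.mem_support_iff.mpr
          (by rw [hco]; exact (partMultCoeff_half π hne).2)
      have hdv := Finset.dvd_lcm (f := fun d => ((Ppoly ℚ (1/2 : ℚ) m k).coeff d).den) hd
      rw [hco, (partMultCoeff_half π hne).1, hcard, hSval] at hdv
      have he : 2 * k - ((Nat.digits 2 (k-1)).sum + 1) =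
          2 * k - (Nat.digits 2 (k-1)).sum - 1 := by omega
      rw [he] at hdv
      exact hdv

end
end

section
/- Let m ≥ 0, let n ≥ 2m+2 be even, and set k = n/2 − m. Let Q ∈ ℚ[y_{m+1}, …, y_n] be the polynomial obtained from P_{mk}(x_0,…,x_{m+k}) by the substitution x_j ↦ y_{n−j} for j = 0, …, m+k (so Q = P_{mk}(y_n, y_{n−1}, …, y_{n/2})). Then for every integer i with m+1 ≤ i ≤ n, the polynomial identity Σ_j (j−i)·y_{i+j}·∂Q/∂y_j = 0 holds, where the sum runs over all j with m+1 ≤ j ≤ n and i+j ≤ n. (This expresses that Q is an invariant of the coadjoint action of the Lie algebra L_{m+1,n+1} on the polynomial functions on its dual.) -/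
open scoped Classical

noncomputable section

namespace RPI
open MvPolynomial Finset

def mnum (l : ℕ) : ℚ := ∏ j ∈ Finset.range l, ((1:ℚ)/2 - j)
def mden (M : Multiset ℕ) : ℚ := ∏ x ∈ M.toFinset, ((M.count x).factorial : ℚ)
def mcoef (M : Multiset ℕ) : ℚ := mnum (Multiset.card M) / mden M
def mexp (n k : ℕ) (M : Multiset ℕ) : ℕ →₀ ℕ :=
  Finsupp.single n (k - Multiset.card M) + (M.map (n - ·)).toFinsupp

def mkPart (w : ℕ) (M : Multiset ℕ) : Nat.Partition w :=
  if h : (∀ x ∈ M, 0 < x) ∧ M.sum = w then ⟨M, fun hx => h.1 _ hx, h.2⟩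
  else ⟨Multiset.replicate w 1,
    fun hx => by rw [Multiset.eq_of_mem_replicate hx]; norm_num,
    by simp [Multiset.sum_replicate]⟩

lemma toFinsupp_cons (a : ℕ) (M : Multiset ℕ) :
    (a ::ₘ M).toFinsupp = Finsupp.single a 1 + M.toFinsupp := by
  rw [← Multiset.singleton_add, Multiset.toFinsupp_add, Multiset.toFinsupp_singleton]

lemma card_le_sum_of_pos {M : Multiset ℕ} (h : ∀ x ∈ M, 0 < x) :
    Multiset.card M ≤ M.sum := by
  induction M using Multiset.induction with
  | empty => simp
  | cons a M ih =>
    simp only [Multiset.card_cons, Multiset.sum_cons]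
    have ha := h a (Multiset.mem_cons_self a M)
    have := ih (fun x hx => h x (Multiset.mem_cons_of_mem hx))
    omega

lemma mden_ne_zero (M : Multiset ℕ) : mden M ≠ 0 := by
  unfold mden
  refine Finset.prod_ne_zero_iff.mpr fun x _ => ?_
  exact_mod_cast (Nat.factorial_pos _).ne'

lemma mden_cons (a : ℕ) (M : Multiset ℕ) :
    mden (a ::ₘ M) = (M.count a + 1) * mden M := by
  unfold mden
  have h1 : ∏ x ∈ M.toFinset, ((M.count x).factorial : ℚ)
      = ∏ x ∈ insert a M.toFinset, ((M.count x).factorial : ℚ) := by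
    by_cases ha : a ∈ M.toFinset
    · rw [Finset.insert_eq_self.mpr ha]
    · rw [Finset.prod_insert ha,
        Multiset.count_eq_zero_of_notMem (by simpa using ha)]
      simp
  rw [Multiset.toFinset_cons, h1]
  have hmem : a ∈ insert a M.toFinset := Finset.mem_insert_self _ _
  rw [← Finset.mul_prod_erase _ _ hmem, ← Finset.mul_prod_erase _ _ hmem,
    Multiset.count_cons_self]
  rw [Finset.prod_congr rfl (fun x hx => by
    rw [Multiset.count_cons_of_ne (Finset.ne_of_mem_erase hx)])]
  rw [Nat.factorial_succ]
  push_cast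
  ring

lemma prod_X_map (n : ℕ) (M : Multiset ℕ) :
    (M.map (fun a => (X (n - a) : MvPolynomial ℕ ℚ))).prod
      = monomial ((M.map (n - ·)).toFinsupp) 1 := by
  induction M using Multiset.induction with
  | empty => simp
  | cons a M ih =>
    rw [Multiset.map_cons, Multiset.prod_cons, ih, Multiset.map_cons, toFinsupp_cons,
      X, monomial_mul, one_mul]

lemma coef_key {M : Multiset ℕ} {a : ℕ} (ha : a ∈ M) :
    mcoef M * (M.count a : ℚ)
      = mnum (Multiset.card (M.erase a) + 1) / mden (M.erase a) := by
  set E := M.erase a with hE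
  have hM : M = a ::ₘ E := (Multiset.cons_erase ha).symm
  rw [hM, mcoef, mden_cons, Multiset.card_cons, Multiset.count_cons_self]
  have h1 : ((E.count a : ℚ) + 1) ≠ 0 := by positivity
  have h2 := mden_ne_zero E
  push_cast
  field_simp

lemma filter_pos_cons (b : ℕ) (E : Multiset ℕ) (hE : ∀ x ∈ E, 0 < x) :
    (b ::ₘ E).filter (fun x => 0 < x) = if 0 < b then b ::ₘ E else E := by
  rw [Multiset.filter_cons, Multiset.filter_eq_self.mpr hE]
  split_ifs <;> simp [Multiset.singleton_add]

lemma mexp_apply {n k : ℕ} (M : Multiset ℕ) {j : ℕ} (hj : j < n) (hM : ∀ a ∈ M, a ≤ n) :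
    mexp n k M j = M.count (n - j) := by
  unfold mexp
  rw [Finsupp.add_apply, Finsupp.single_apply, if_neg (by omega), zero_add,
    Multiset.toFinsupp_apply, Multiset.count_map, Multiset.count_eq_card_filter_eq]
  congr 1
  apply Multiset.filter_congr
  intro x hx
  have := hM x hx
  constructor <;> (intro h; omega)

lemma mkPart_parts {w : ℕ} {M : Multiset ℕ} (h1 : ∀ x ∈ M, 0 < x) (h2 : M.sum = w) :
    (mkPart w M).parts = M := by
  rw [mkPart, dif_pos ⟨h1, h2⟩]

lemma parts_le {w : ℕ} (π : Nat.Partition w) {x : ℕ} (hx : x ∈ π.parts) : x ≤ w := by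
  rw [← π.parts_sum]
  exact Multiset.single_le_sum (fun y _ => Nat.zero_le y) x hx

lemma partMultCoeff_eq {m k : ℕ} (π : Nat.Partition (m+k)) :
    partMultCoeff (1/2 : ℚ) π = mcoef π.parts := by
  unfold partMultCoeff mcoef mnum mden
  congr 1
  refine (Finset.prod_subset ?_ ?_).symm
  · intro x hx
    rw [Multiset.mem_toFinset] at hx
    exact Finset.mem_Icc.mpr ⟨π.parts_pos hx, parts_le π hx⟩
  · intro x _ hx
    rw [Multiset.count_eq_zero_of_notMem (by simpa using hx)]
    simp

lemma rename_term {m k n : ℕ} (π : Nat.Partition (m+k)) :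
    MvPolynomial.rename (fun j => n - j)
      ((C (partMultCoeff (1/2:ℚ) π) : MvPolynomial ℕ ℚ) * X 0 ^ (k - Multiset.card π.parts) *
        ∏ i ∈ Finset.Icc 1 (m+k), X i ^ π.parts.count i)
      = monomial (mexp n k π.parts) (mcoef π.parts) := by
  rw [map_mul, map_mul, rename_C, map_pow, rename_X, map_prod]
  simp only [map_pow, rename_X]
  have hprod : ∏ i ∈ Finset.Icc 1 (m+k), (X (n - i) : MvPolynomial ℕ ℚ) ^ π.parts.count i
      = monomial ((π.parts.map (n - ·)).toFinsupp) 1 := by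
    rw [← prod_X_map n π.parts, Finset.prod_multiset_map_count]
    refine (Finset.prod_subset ?_ ?_).symm
    · intro x hx
      rw [Multiset.mem_toFinset] at hx
      exact Finset.mem_Icc.mpr ⟨π.parts_pos hx, parts_le π hx⟩
    · intro x _ hx
      rw [Multiset.count_eq_zero_of_notMem (by simpa using hx)]
      simp
  rw [hprod, Nat.sub_zero, X_pow_eq_monomial, C_mul_monomial, monomial_mul,
    partMultCoeff_eq, mul_one, mul_one, mexp]

lemma Q_eq {m k n : ℕ} :
    MvPolynomial.rename (fun j => n - j) (Ppoly ℚ (1/2 : ℚ) m k)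
      = ∑ π ∈ Finset.univ.filter (fun π : Nat.Partition (m + k) => ∃ a ∈ π.parts, m < a),
          monomial (mexp n k π.parts) (mcoef π.parts) := by
  rw [Ppoly, map_sum]
  exact Finset.sum_congr rfl fun π _ => rename_term π

lemma card_le_k {m k : ℕ} (π : Nat.Partition (m+k)) (hπ : ∃ a ∈ π.parts, m < a) :
    Multiset.card π.parts ≤ k := by
  obtain ⟨a, ha, ham⟩ := hπ
  have h1 : a + (π.parts.erase a).sum = m + k := by
    rw [← Multiset.sum_cons, Multiset.cons_erase ha, π.parts_sum]
  have h2 : Multiset.card (π.parts.erase a) ≤ (π.parts.erase a).sum :=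
    card_le_sum_of_pos (fun x hx => π.parts_pos (Multiset.mem_of_mem_erase hx))
  have h3 : Multiset.card π.parts = Multiset.card (π.parts.erase a) + 1 := by
    conv_lhs => rw [← Multiset.cons_erase ha]
    rw [Multiset.card_cons]
  omega

lemma sum_zero {m k n i : ℕ} (hn : n = 2*(m+k)) (hi : i ≤ m + k)
    (M : Multiset ℕ) (hpos : ∀ x ∈ M, 0 < x) (hsum : M.sum = (m+k) - i) :
    ∑ b ∈ insert 0 M.toFinset,
      mnum (Multiset.card (M.erase b) + 1) / mden (M.erase b) * ((n:ℚ) - 2*i - b) = 0 := by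
  have h0M : (0:ℕ) ∉ M := fun h => absurd (hpos 0 h) (lt_irrefl 0)
  have h0 : (0:ℕ) ∉ M.toFinset := by simpa using h0M
  rw [Finset.sum_insert h0, Multiset.erase_of_notMem h0M]
  have hterm : ∀ b ∈ M.toFinset,
      mnum (Multiset.card (M.erase b) + 1) / mden (M.erase b) * ((n:ℚ) - 2*i - b)
        = mcoef M * ((n:ℚ)-2*i) * (M.count b : ℚ) - mcoef M * ((M.count b : ℚ) * b) := by
    intro b hb
    rw [← coef_key (Multiset.mem_toFinset.mp hb)]
    ring
  rw [Finset.sum_congr rfl hterm, Finset.sum_sub_distrib, ← Finset.mul_sum, ← Finset.mul_sum]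
  have hcard : ∑ b ∈ M.toFinset, (M.count b : ℚ) = (Multiset.card M : ℚ) := by
    rw [← Nat.cast_sum, Multiset.toFinset_sum_count_eq]
  have hsum2 : ∑ b ∈ M.toFinset, (M.count b : ℚ) * b = ((m+k : ℕ) : ℚ) - i := by
    have h1 := Finset.sum_multiset_map_count M (Nat.cast : ℕ → ℚ)
    have h2 : (M.map (Nat.cast : ℕ → ℚ)).sum = (M.sum : ℚ) := (Nat.cast_multiset_sum M).symm
    rw [h2, hsum] at h1
    rw [Finset.sum_congr rfl (fun b _ => ?_), ← h1]
    · rw [Nat.cast_sub hi]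
    · rw [nsmul_eq_mul]
  rw [hcard, hsum2]
  have hnum : mnum (Multiset.card M + 1) = mnum (Multiset.card M) * ((1:ℚ)/2 - Multiset.card M) :=
    Finset.prod_range_succ _ _
  rw [hnum, mcoef]
  have hD := mden_ne_zero M
  have hncast : (n:ℚ) = 2*((m:ℚ)+k) := by exact_mod_cast congrArg (Nat.cast : ℕ → ℚ) hn
  field_simp
  rw [hncast]
  push_cast
  ring

lemma exp_key {m k n : ℕ} {i j : ℕ}
    (hi : 1 ≤ i) (hij : i + j ≤ n) (hjn : j ≤ n)
    (π : Nat.Partition (m+k)) (hcard : Multiset.card π.parts ≤ k)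
    (hmem : n - j ∈ π.parts) (hia : i ≤ n - j) :
    Finsupp.single (i+j) 1 + (mexp n k π.parts - Finsupp.single j 1)
      = mexp n k (((n - j - i) ::ₘ π.parts.erase (n - j)).filter (fun x => 0 < x)) := by
  set a := n - j with ha
  set E := π.parts.erase a with hEdef
  have hparts : π.parts = a ::ₘ E := (Multiset.cons_erase hmem).symm
  have hEpos : ∀ x ∈ E, 0 < x := fun x hx => π.parts_pos (Multiset.mem_of_mem_erase hx)
  have hcards : Multiset.card π.parts = Multiset.card E + 1 := by
    rw [hparts, Multiset.card_cons]
  have hna : n - a = j := by omega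
  have hsub : mexp n k π.parts
      = (Finsupp.single n (k - (Multiset.card E + 1)) + (E.map (n - ·)).toFinsupp)
        + Finsupp.single j 1 := by
    rw [mexp, hcards]
    conv_lhs => rw [hparts]
    rw [Multiset.map_cons, hna, toFinsupp_cons]
    abel
  rw [hsub, add_tsub_cancel_right, filter_pos_cons _ _ hEpos]
  by_cases hb : 0 < a - i
  · rw [if_pos hb, mexp, Multiset.map_cons, toFinsupp_cons, Multiset.card_cons]
    have h1 : n - (a - i) = i + j := by omega
    rw [h1]
    abel
  · rw [if_neg hb, mexp]
    have h2 : i + j = n := by omega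
    rw [h2, ← add_assoc, ← Finsupp.single_add]
    have h3 : 1 + (k - (Multiset.card E + 1)) = k - Multiset.card E := by omega
    rw [h3]

lemma filter_cons_erase (b : ℕ) (E : Multiset ℕ) (hE : ∀ x ∈ E, 0 < x) :
    (((b ::ₘ E).filter (fun x => 0 < x)).erase b) = E := by
  rw [filter_pos_cons _ _ hE]
  by_cases hb : 0 < b
  · rw [if_pos hb, Multiset.erase_cons_head]
  · rw [if_neg hb]
    have hb0 : b = 0 := by omega
    subst hb0
    exact Multiset.erase_of_notMem (fun h => absurd (hE 0 h) (lt_irrefl 0))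

lemma filter_cons_of_erase {b : ℕ} (P : Multiset ℕ) (hpos : ∀ x ∈ P, 0 < x)
    (hb : b = 0 ∨ b ∈ P) :
    ((b ::ₘ P.erase b).filter (fun x => 0 < x)) = P := by
  have hE : ∀ x ∈ P.erase b, 0 < x := fun x hx => hpos x (Multiset.mem_of_mem_erase hx)
  rw [filter_pos_cons _ _ hE]
  rcases hb with rfl | hb
  · rw [if_neg (lt_irrefl 0), Multiset.erase_of_notMem (fun h => absurd (hpos 0 h) (lt_irrefl 0))]
  · rw [if_pos (hpos b hb), Multiset.cons_erase hb]

lemma erase_sum {w : ℕ} (π' : Nat.Partition w) {b : ℕ} (hb : b = 0 ∨ b ∈ π'.parts) :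
    b + (π'.parts.erase b).sum = w := by
  rcases hb with rfl | hb
  · rw [Multiset.erase_of_notMem (fun h => absurd (π'.parts_pos h) (lt_irrefl 0)), π'.parts_sum,
      zero_add]
  · rw [← Multiset.sum_cons, Multiset.cons_erase hb, π'.parts_sum]

lemma Mprime_sum {m k n i j : ℕ} (hij : i + j ≤ n) (hjn : j ≤ n) (hnk : n = 2*(m+k))
    (π : Nat.Partition (m+k)) (hmem : n - j ∈ π.parts) :
    ((((n - j - i) ::ₘ π.parts.erase (n - j)).filter (fun x => 0 < x)).sum) = m + k - i := by
  have hEpos : ∀ x ∈ π.parts.erase (n - j), 0 < x :=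
    fun x hx => π.parts_pos (Multiset.mem_of_mem_erase hx)
  have hsum : (n - j) + (π.parts.erase (n-j)).sum = m + k := by
    rw [← Multiset.sum_cons, Multiset.cons_erase hmem, π.parts_sum]
  rw [filter_pos_cons _ _ hEpos]
  by_cases hb : 0 < n - j - i
  · rw [if_pos hb, Multiset.sum_cons]; omega
  · rw [if_neg hb]; omega

lemma term_eq {m k n i j : ℕ} (hn : n = 2*(m+k)) (hj : j < n)
    (π : Nat.Partition (m+k)) :
    (C ((j:ℚ) - (i:ℚ)) : MvPolynomial ℕ ℚ) * X (i+j)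
        * pderiv j (monomial (mexp n k π.parts) (mcoef π.parts))
      = monomial (Finsupp.single (i+j) 1 + (mexp n k π.parts - Finsupp.single j 1))
          (((j:ℚ) - (i:ℚ)) * (mcoef π.parts * (π.parts.count (n - j) : ℚ))) := by
  rw [pderiv_monomial, mexp_apply π.parts hj (fun a ha => le_trans (parts_le π ha) (by omega)),
    C_apply, X, monomial_mul, monomial_mul]
  simp only [zero_add, mul_one]

end RPI

section
open RPI MvPolynomial Finset

/-- Let `Q = P_{mk}(yₙ, y_{n−1}, …, y_{n/2})` be obtained from
`P_{mk} = P^{(1/2)}_{mk}` by the substitution `x_j ↦ y_{n−j}`.  Then for every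
`m+1 ≤ i ≤ n`, `Σ_j (j−i)·y_{i+j}·∂Q/∂y_j = 0`, the sum over `m+1 ≤ j ≤ n` with
`i+j ≤ n`: `Q` is an invariant of the coadjoint action of `L_{m+1,n+1}`. -/
theorem renamed_Ppoly_invariant (m k n : ℕ) (hk : 1 ≤ k) (hn : n = 2 * (m + k)) :
    ∀ i : ℕ, m + 1 ≤ i → i ≤ n →
      ∑ j ∈ (Finset.Icc (m + 1) n).filter (fun j => i + j ≤ n),
        MvPolynomial.C ((j : ℚ) - (i : ℚ)) * MvPolynomial.X (i + j) *
          MvPolynomial.pderiv j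
            (MvPolynomial.rename (fun j => n - j) (Ppoly ℚ (1/2 : ℚ) m k)) = 0 := by
  intro i hi1 hi2
  have hik : 1 ≤ i := by omega
  rw [Q_eq (n := n)]
  set S := Finset.univ.filter (fun π : Nat.Partition (m + k) => ∃ a ∈ π.parts, m < a) with hS
  set J := (Finset.Icc (m + 1) n).filter (fun j => i + j ≤ n) with hJ
  have step1 : ∀ j ∈ J,
      (C ((j:ℚ) - (i:ℚ)) : MvPolynomial ℕ ℚ) * X (i+j)
          * pderiv j (∑ π ∈ S, monomial (mexp n k π.parts) (mcoef π.parts))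
      = ∑ π ∈ S, monomial (Finsupp.single (i+j) 1 + (mexp n k π.parts - Finsupp.single j 1))
          (((j:ℚ) - (i:ℚ)) * (mcoef π.parts * (π.parts.count (n - j) : ℚ))) := by
    intro j hj
    rw [hJ, Finset.mem_filter, Finset.mem_Icc] at hj
    rw [map_sum, Finset.mul_sum]
    exact Finset.sum_congr rfl fun π _ => term_eq hn (by omega) π
  rw [Finset.sum_congr rfl step1, ← Finset.sum_product']
  rw [← Finset.sum_filter_of_ne (p := fun q : ℕ × Nat.Partition (m+k) => n - q.1 ∈ q.2.parts) ?side]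
  case side =>
    intro q hq hne
    by_contra h
    apply hne
    rw [Multiset.count_eq_zero_of_notMem h]
    simp
  by_cases hiN : i ≤ m + k
  · -- the bijection
    have key : ∑ q ∈ (J ×ˢ S).filter (fun q => n - q.1 ∈ q.2.parts),
        monomial (Finsupp.single (i+q.1) 1 + (mexp n k q.2.parts - Finsupp.single q.1 1))
          (((q.1:ℚ) - (i:ℚ)) * (mcoef q.2.parts * (q.2.parts.count (n - q.1) : ℚ)))
        = ∑ p ∈ (Finset.univ : Finset (Nat.Partition (m + k - i))).sigma
            (fun π' => insert 0 π'.parts.toFinset),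
            monomial (mexp n k p.1.parts)
              (mnum (Multiset.card (p.1.parts.erase p.2) + 1) / mden (p.1.parts.erase p.2)
                * ((n:ℚ) - 2*i - p.2)) := by
      refine Finset.sum_bij'
        (fun q hq => (⟨mkPart (m + k - i)
            (((n - q.1 - i) ::ₘ q.2.parts.erase (n - q.1)).filter (fun x => 0 < x)),
          n - q.1 - i⟩ : Σ _ : Nat.Partition (m + k - i), ℕ))
        (fun p hp => ((n - i - p.2, mkPart (m + k) ((p.2 + i) ::ₘ p.1.parts.erase p.2)) :
          ℕ × Nat.Partition (m + k)))
        ?_ ?_ ?_ ?_ ?_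
      · -- maps into B
        intro q hq
        rw [Finset.mem_filter, Finset.mem_product, hJ, Finset.mem_filter, Finset.mem_Icc] at hq
        obtain ⟨⟨⟨⟨hj1, hj2⟩, hj3⟩, _⟩, hmem⟩ := hq
        have hEpos : ∀ x ∈ q.2.parts.erase (n - q.1), 0 < x :=
          fun x hx => q.2.parts_pos (Multiset.mem_of_mem_erase hx)
        have hMpos : ∀ x ∈ ((n - q.1 - i) ::ₘ q.2.parts.erase (n - q.1)).filter (fun x => 0 < x),
            0 < x := fun x hx => (Multiset.mem_filter.mp hx).2
        have hMsum := Mprime_sum hj3 hj2 hn q.2 hmem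
        rw [Finset.mem_sigma]
        refine ⟨Finset.mem_univ _, ?_⟩
        rw [mkPart_parts hMpos hMsum]
        by_cases hb : 0 < n - q.1 - i
        · refine Finset.mem_insert_of_mem ?_
          rw [Multiset.mem_toFinset, filter_pos_cons _ _ hEpos, if_pos hb]
          exact Multiset.mem_cons_self _ _
        · have : n - q.1 - i = 0 := by omega
          rw [this]
          exact Finset.mem_insert_self 0 _
      · -- maps into A
        intro p hp
        rw [Finset.mem_sigma] at hp
        obtain ⟨-, hb⟩ := hp
        have hb' : p.2 = 0 ∨ p.2 ∈ p.1.parts := by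
          rcases Finset.mem_insert.mp hb with h | h
          · exact Or.inl h
          · exact Or.inr (Multiset.mem_toFinset.mp h)
        have hbs := erase_sum p.1 hb'
        have hb2 : p.2 ≤ m + k - i := by omega
        have hM1pos : ∀ x ∈ (p.2 + i) ::ₘ p.1.parts.erase p.2, 0 < x := by
          intro x hx
          rcases Multiset.mem_cons.mp hx with rfl | h
          · omega
          · exact p.1.parts_pos (Multiset.mem_of_mem_erase h)
        have hM1sum : ((p.2 + i) ::ₘ p.1.parts.erase p.2).sum = m + k := by
          rw [Multiset.sum_cons]; omega
        rw [Finset.mem_filter, Finset.mem_product, hJ, Finset.mem_filter, Finset.mem_Icc]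
        have hnj : n - (n - i - p.2) = i + p.2 := by omega
        refine ⟨⟨⟨⟨?_, ?_⟩, ?_⟩, ?_⟩, ?_⟩
        · omega
        · omega
        · omega
        · rw [hS, Finset.mem_filter]
          refine ⟨Finset.mem_univ _, ⟨p.2 + i, ?_, by omega⟩⟩
          rw [mkPart_parts hM1pos hM1sum]
          exact Multiset.mem_cons_self _ _
        · show n - (n - i - p.2) ∈ _
          rw [hnj, mkPart_parts hM1pos hM1sum, add_comm i p.2]
          exact Multiset.mem_cons_self _ _
      · -- left inverse
        intro q hq
        dsimp only
        rw [Finset.mem_filter, Finset.mem_product, hJ, Finset.mem_filter, Finset.mem_Icc] at hq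
        obtain ⟨⟨⟨⟨hj1, hj2⟩, hj3⟩, _⟩, hmem⟩ := hq
        have hEpos : ∀ x ∈ q.2.parts.erase (n - q.1), 0 < x :=
          fun x hx => q.2.parts_pos (Multiset.mem_of_mem_erase hx)
        have hMpos : ∀ x ∈ ((n - q.1 - i) ::ₘ q.2.parts.erase (n - q.1)).filter (fun x => 0 < x),
            0 < x := fun x hx => (Multiset.mem_filter.mp hx).2
        have hMsum := Mprime_sum hj3 hj2 hn q.2 hmem
        have hia : i ≤ n - q.1 := by omega
        have hP2pos : ∀ x ∈ (n - q.1) ::ₘ q.2.parts.erase (n - q.1), 0 < x := by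
          intro x hx
          rcases Multiset.mem_cons.mp hx with rfl | h
          · exact q.2.parts_pos hmem
          · exact hEpos x h
        have hP2sum : ((n - q.1) ::ₘ q.2.parts.erase (n - q.1)).sum = m + k := by
          rw [Multiset.cons_erase hmem, q.2.parts_sum]
        have h1 : n - i - (n - q.1 - i) = q.1 := by omega
        have h2 : n - q.1 - i + i = n - q.1 := by omega
        refine Prod.ext h1 (Nat.Partition.ext ?_)
        rw [mkPart_parts hMpos hMsum, filter_cons_erase _ _ hEpos, h2,
          mkPart_parts hP2pos hP2sum, Multiset.cons_erase hmem]
      · -- right inverse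
        intro p hp
        obtain ⟨π', b⟩ := p
        dsimp only
        rw [Finset.mem_sigma] at hp
        obtain ⟨-, hb⟩ := hp
        have hb' : b = 0 ∨ b ∈ π'.parts := by
          rcases Finset.mem_insert.mp hb with h | h
          · exact Or.inl h
          · exact Or.inr (Multiset.mem_toFinset.mp h)
        have hbs := erase_sum π' hb'
        have hM1pos : ∀ x ∈ (b + i) ::ₘ π'.parts.erase b, 0 < x := by
          intro x hx
          rcases Multiset.mem_cons.mp hx with rfl | h
          · omega
          · exact π'.parts_pos (Multiset.mem_of_mem_erase h)
        have hM1sum : ((b + i) ::ₘ π'.parts.erase b).sum = m + k := by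
          rw [Multiset.sum_cons]; omega
        have h3 : n - (n - i - b) = b + i := by omega
        have h4 : n - (n - i - b) - i = b := by omega
        have hfst : mkPart (m + k - i)
            (((n - (n - i - b) - i) ::ₘ
              (mkPart (m+k) ((b + i) ::ₘ π'.parts.erase b)).parts.erase (n - (n - i - b))).filter
              (fun x => 0 < x)) = π' := by
          apply Nat.Partition.ext
          rw [mkPart_parts hM1pos hM1sum, h4, h3, Multiset.erase_cons_head]
          rw [filter_cons_of_erase π'.parts (fun x hx => π'.parts_pos hx) hb']
          exact mkPart_parts (fun x hx => π'.parts_pos hx) π'.parts_sum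
        exact Sigma.ext hfst (heq_of_eq h4)
      · -- summand match
        intro q hq
        dsimp only
        rw [Finset.mem_filter, Finset.mem_product, hJ, Finset.mem_filter, Finset.mem_Icc] at hq
        obtain ⟨⟨⟨⟨hj1, hj2⟩, hj3⟩, hπS⟩, hmem⟩ := hq
        rw [hS, Finset.mem_filter] at hπS
        obtain ⟨-, hπ⟩ := hπS
        have hEpos : ∀ x ∈ q.2.parts.erase (n - q.1), 0 < x :=
          fun x hx => q.2.parts_pos (Multiset.mem_of_mem_erase hx)
        have hMpos : ∀ x ∈ ((n - q.1 - i) ::ₘ q.2.parts.erase (n - q.1)).filter (fun x => 0 < x),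
            0 < x := fun x hx => (Multiset.mem_filter.mp hx).2
        have hMsum := Mprime_sum hj3 hj2 hn q.2 hmem
        have hia : i ≤ n - q.1 := by omega
        rw [exp_key hik hj3 hj2 q.2 (card_le_k q.2 hπ) hmem hia,
          mkPart_parts hMpos hMsum, filter_cons_erase _ _ hEpos]
        congr 1
        rw [coef_key hmem]
        have h5 : (n - q.1 - i) + (i + q.1) = n := by omega
        have h5' : ((n - q.1 - i : ℕ) : ℚ) + ((i:ℚ) + (q.1:ℚ)) = (n:ℚ) := by
          exact_mod_cast congrArg (Nat.cast : ℕ → ℚ) h5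
        have h6 : (q.1:ℚ) - (i:ℚ) = (n:ℚ) - 2*(i:ℚ) - ((n - q.1 - i : ℕ):ℚ) := by linarith
        rw [h6]
        ring
    rw [key, Finset.sum_sigma]
    refine Finset.sum_eq_zero fun π' _ => ?_
    rw [← map_sum (monomial (mexp n k π'.parts)),
      sum_zero hn hiN π'.parts (fun x hx => π'.parts_pos hx) π'.parts_sum]
    exact monomial_zero
  · refine Finset.sum_eq_zero fun q hq => ?_
    exfalso
    rw [Finset.mem_filter, Finset.mem_product, hJ, Finset.mem_filter, Finset.mem_Icc] at hq
    obtain ⟨⟨⟨⟨hj1, hj2⟩, hj3⟩, _⟩, hmem⟩ := hq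
    have := parts_le q.2 hmem
    omega

end

end
end

section
/- Let f be a field of characteristic 0, λ ∈ f with λ ≠ 0, m ≥ 0 and k ≥ 1, and set μ = (m+k+1)λ. Let P = P^{(−1/λ)}_{mk}(x_0,…,x_{m+k}) ∈ f[x_0,…,x_{m+k}]. Then for every integer i with i ≥ m+1, the polynomial identity Σ_{j=0}^{m+k−i} (j + μ − λ(i+1))·x_j·∂P/∂x_{i+j} = 0 holds (the sum being empty, hence the identity trivial, when i > m+k). (This expresses that P is annihilated by the derivations implementing the action of the vector fields l_i = t^{i+1} d/dt, i ≥ m+1, on the coefficients of tensor fields h = Σ_j x_j t^{j+μ}(dt)^{−λ}, and hence is a G_{m+1}-invariant of F_{λμ}.) -/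
open scoped Classical

noncomputable section

namespace PAux


open Finset MvPolynomial

lemma multiset_card_le_sum (s : Multiset ℕ) (h : ∀ x ∈ s, 0 < x) :
    Multiset.card s ≤ s.sum := by
  induction s using Multiset.induction_on with
  | empty => simp
  | cons a t ih =>
    simp only [Multiset.card_cons, Multiset.sum_cons]
    have h1 := h a (Multiset.mem_cons_self a t)
    have h2 := ih (fun x hx => h x (Multiset.mem_cons_of_mem hx))
    omega

lemma count_eq_zero_of_sum_lt {s : Multiset ℕ} {b : ℕ} (h : s.sum < b) : s.count b = 0 := by
  rw [Multiset.count_eq_zero]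
  intro hb
  exact absurd (Multiset.le_sum_of_mem hb) (by omega)

/-- The exponent finsupp of the monomial attached to a multiset of parts. -/
def Emap (k n : ℕ) (s : Multiset ℕ) : ℕ →₀ ℕ :=
  Finsupp.single 0 (k - Multiset.card s) +
    ∑ a ∈ Finset.Icc 1 n, Finsupp.single a (s.count a)

lemma Emap_apply (k n : ℕ) (s : Multiset ℕ) (b : ℕ) :
    Emap k n s b = if b = 0 then k - Multiset.card s
      else if b ≤ n then s.count b else 0 := by
  rw [Emap, Finsupp.add_apply, Finsupp.finset_sum_apply]
  by_cases hb0 : b = 0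
  · subst hb0
    rw [if_pos rfl, Finsupp.single_eq_same]
    have h : ∑ a ∈ Finset.Icc 1 n, (Finsupp.single a (s.count a)) 0 = 0 :=
      Finset.sum_eq_zero fun a ha => Finsupp.single_eq_of_ne
        (by rw [Finset.mem_Icc] at ha; omega)
    rw [h, add_zero]
  · rw [if_neg hb0, Finsupp.single_eq_of_ne' (Ne.symm hb0), zero_add]
    by_cases hbn : b ≤ n
    · rw [if_pos hbn]
      rw [Finset.sum_eq_single_of_mem b (Finset.mem_Icc.mpr ⟨by omega, hbn⟩)
        (fun a _ hab => Finsupp.single_eq_of_ne' hab)]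
      exact Finsupp.single_eq_same
    · rw [if_neg hbn]
      exact Finset.sum_eq_zero fun a ha => Finsupp.single_eq_of_ne
        (by rw [Finset.mem_Icc] at ha; omega)

/-- The generalized multinomial coefficient as a function of the multiset of parts. -/
def Wc {f : Type*} [Field f] (c : f) (n : ℕ) (s : Multiset ℕ) : f :=
  (∏ t ∈ Finset.range (Multiset.card s), (c - t)) /
    ∏ a ∈ Finset.Icc 1 n, ((s.count a).factorial : f)

/-- Replace one part `j` (or add a part, if `j = 0`) by the part `i + j`. -/
def PhiM (i j : ℕ) (s : Multiset ℕ) : Multiset ℕ := (i + j) ::ₘ s.erase j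

/-- Replace one part `i + j` by the part `j` (deleting it if `j = 0`). -/
def PsiM (i j : ℕ) (s : Multiset ℕ) : Multiset ℕ :=
  Multiset.filter (0 < ·) (j ::ₘ s.erase (i + j))

lemma PhiM_PsiM (i j : ℕ) (s : Multiset ℕ) (hmem : i + j ∈ s)
    (hpos : ∀ x ∈ s, 0 < x) : PhiM i j (PsiM i j s) = s := by
  have he : ∀ x ∈ s.erase (i + j), 0 < x := fun x hx =>
    hpos x (Multiset.mem_of_mem_erase hx)
  rcases Nat.eq_zero_or_pos j with hj | hj
  · subst hj
    rw [PsiM, PhiM, Multiset.filter_cons_of_neg (p := fun x => 0 < x) _ (by omega)]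
    rw [Multiset.filter_eq_self.mpr he]
    rw [Multiset.erase_of_notMem (fun h0 => absurd (he 0 h0) (by omega))]
    rw [Nat.add_zero]
    exact Multiset.cons_erase hmem
  · rw [PsiM, PhiM, Multiset.filter_cons_of_pos (p := fun x => 0 < x) _ hj]
    rw [Multiset.filter_eq_self.mpr he, Multiset.erase_cons_head]
    exact Multiset.cons_erase hmem

lemma PsiM_PhiM (i j : ℕ) (s : Multiset ℕ) (hj : j = 0 ∨ j ∈ s)
    (hpos : ∀ x ∈ s, 0 < x) : PsiM i j (PhiM i j s) = s := by
  rw [PhiM, PsiM, Multiset.erase_cons_head]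
  rcases hj with hj | hj
  · subst hj
    rw [Multiset.filter_cons_of_neg (p := fun x => 0 < x) _ (by omega)]
    rw [Multiset.erase_of_notMem (fun h0 => absurd (hpos 0 h0) (by omega))]
    exact Multiset.filter_eq_self.mpr hpos
  · rw [Multiset.filter_cons_of_pos (p := fun x => 0 < x) _ (hpos j hj)]
    rw [Multiset.filter_eq_self.mpr (fun x hx => hpos x (Multiset.mem_of_mem_erase hx))]
    exact Multiset.cons_erase hj

lemma PhiM_card0 (i : ℕ) (s : Multiset ℕ) (hpos : ∀ x ∈ s, 0 < x) :
    PhiM i 0 s = (i ::ₘ s) ∧ Multiset.card (PhiM i 0 s) = Multiset.card s + 1 := by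
  have h : PhiM i 0 s = i ::ₘ s := by
    rw [PhiM, Nat.add_zero,
      Multiset.erase_of_notMem (fun h0 => absurd (hpos 0 h0) (by omega))]
  exact ⟨h, by rw [h, Multiset.card_cons]⟩

lemma PhiM_cardB (i j : ℕ) (s : Multiset ℕ) (hj : j ∈ s) :
    Multiset.card (PhiM i j s) = Multiset.card s := by
  rw [PhiM, Multiset.card_cons, Multiset.card_erase_of_mem hj]
  exact Nat.succ_pred_eq_of_pos (Multiset.card_pos_iff_exists_mem.mpr ⟨j, hj⟩)

lemma PhiM_sum (i j : ℕ) (s : Multiset ℕ) (hj : j = 0 ∨ j ∈ s)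
    (hpos : ∀ x ∈ s, 0 < x) : (PhiM i j s).sum = i + s.sum := by
  rcases hj with hj | hj
  · subst hj
    rw [(PhiM_card0 i s hpos).1, Multiset.sum_cons]
  · rw [PhiM, Multiset.sum_cons]
    have h1 : s = j ::ₘ s.erase j := (Multiset.cons_erase hj).symm
    have h2 : s.sum = j + (s.erase j).sum := by
      conv_lhs => rw [h1]
      rw [Multiset.sum_cons]
    omega

lemma count_PhiM0 (i a : ℕ) (s : Multiset ℕ) (hpos : ∀ x ∈ s, 0 < x) :
    (PhiM i 0 s).count a = s.count a + if a = i then 1 else 0 := by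
  rw [(PhiM_card0 i s hpos).1]
  by_cases hai : a = i
  · subst hai; rw [Multiset.count_cons_self, if_pos rfl]
  · rw [Multiset.count_cons_of_ne hai, if_neg hai, Nat.add_zero]

lemma count_PhiMB (i j a : ℕ) (s : Multiset ℕ) (hi : 0 < i) :
    (PhiM i j s).count a =
      (s.count a - if a = j then 1 else 0) + if a = i + j then 1 else 0 := by
  have hij : i + j ≠ j := by omega
  rw [PhiM]
  by_cases ha1 : a = i + j
  · subst ha1
    rw [Multiset.count_cons_self, if_pos rfl, if_neg hij,
      Multiset.count_erase_of_ne hij, Nat.sub_zero]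
  · rw [Multiset.count_cons_of_ne ha1, if_neg ha1, Nat.add_zero]
    by_cases ha2 : a = j
    · subst ha2; rw [if_pos rfl, Multiset.count_erase_self]
    · rw [if_neg ha2, Multiset.count_erase_of_ne ha2, Nat.sub_zero]

/-- The key exponent identity. -/
lemma Emap_PhiM (k n i j : ℕ) (s : Multiset ℕ) (hpos : ∀ x ∈ s, 0 < x)
    (hcard : Multiset.card s < k) (hsum : s.sum + i = n) (hi : 0 < i)
    (hj : j = 0 ∨ j ∈ s) :
    Finsupp.single j 1 + (Emap k n (PhiM i j s) - Finsupp.single (i + j) 1)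
      = Emap k n s := by
  have hjn : j ≤ n := by
    rcases hj with hj | hj
    · omega
    · have := Multiset.le_sum_of_mem hj; omega
  have hijn : i + j ≤ n := by
    rcases hj with hj | hj
    · omega
    · have := Multiset.le_sum_of_mem hj; omega
  have hcnt : ∀ b, n < b → s.count b = 0 := fun b hb =>
    count_eq_zero_of_sum_lt (by omega)
  ext b
  rw [Finsupp.add_apply, Finsupp.tsub_apply, Emap_apply, Emap_apply]
  rcases hj with hj0 | hjs
  · subst hj0
    have hc := count_PhiM0 i b s hpos
    have hcard' := (PhiM_card0 i s hpos).2
    rw [Nat.add_zero] at *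
    by_cases hb0 : b = 0
    · subst hb0
      rw [if_pos rfl, if_pos rfl, Finsupp.single_eq_same,
        Finsupp.single_eq_of_ne' (show i ≠ 0 by omega), hcard']
      omega
    · rw [if_neg hb0, if_neg hb0, Finsupp.single_eq_of_ne' (show (0:ℕ) ≠ b by omega)]
      by_cases hbn : b ≤ n
      · rw [if_pos hbn, if_pos hbn, hc]
        by_cases hbi : b = i
        · subst hbi
          rw [Finsupp.single_eq_same, if_pos rfl]
          omega
        · rw [Finsupp.single_eq_of_ne' (show i ≠ b from fun h => hbi h.symm),
            if_neg hbi]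
          omega
      · rw [if_neg hbn, if_neg hbn,
          Finsupp.single_eq_of_ne' (show i ≠ b by omega)]
        rfl
  · have hcmem : 0 < s.count j := Multiset.count_pos.mpr hjs
    have hc := fun b => count_PhiMB i j b s hi
    have hcard' := PhiM_cardB i j s hjs
    have hjpos := hpos j hjs
    by_cases hb0 : b = 0
    · subst hb0
      rw [if_pos rfl, if_pos rfl, Finsupp.single_eq_of_ne' (show j ≠ 0 by omega),
        Finsupp.single_eq_of_ne' (show i + j ≠ 0 by omega), hcard']
      omega
    · rw [if_neg hb0, if_neg hb0]
      by_cases hbn : b ≤ n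
      · rw [if_pos hbn, if_pos hbn, hc b]
        by_cases hbj : b = j
        · subst hbj
          rw [Finsupp.single_eq_same, Finsupp.single_eq_of_ne' (show i + b ≠ b by omega),
            if_pos rfl, if_neg (show b ≠ i + b by omega)]
          omega
        · rw [Finsupp.single_eq_of_ne' (show j ≠ b from fun h => hbj h.symm),
            if_neg hbj]
          by_cases hbij : b = i + j
          · subst hbij
            rw [Finsupp.single_eq_same, if_pos rfl]
            omega
          · rw [Finsupp.single_eq_of_ne' (show i + j ≠ b from fun h => hbij h.symm),
              if_neg hbij]
            omega
      · rw [if_neg hbn, if_neg hbn,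
          Finsupp.single_eq_of_ne' (show j ≠ b by omega),
          Finsupp.single_eq_of_ne' (show i + j ≠ b by omega)]
        rfl

variable {f : Type*} [Field f] [CharZero f]

lemma prod_fact_ne_zero (n : ℕ) (s : Multiset ℕ) :
    (∏ a ∈ Finset.Icc 1 n, ((s.count a).factorial : f)) ≠ 0 :=
  Finset.prod_ne_zero_iff.mpr fun a _ => Nat.cast_ne_zero.mpr (Nat.factorial_pos _).ne'

lemma Wc_PhiM0 (c : f) (n i : ℕ) (hi1 : 1 ≤ i) (hin : i ≤ n) (s : Multiset ℕ)
    (hpos : ∀ x ∈ s, 0 < x) :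
    Wc c n (PhiM i 0 s) * ((s.count i : f) + 1)
      = (c - (Multiset.card s : f)) * Wc c n s := by
  have hmem : i ∈ Finset.Icc 1 n := Finset.mem_Icc.mpr ⟨hi1, hin⟩
  have hcard := (PhiM_card0 i s hpos).2
  have hD : (∏ a ∈ Finset.Icc 1 n, (((PhiM i 0 s).count a).factorial : f))
      = ((s.count i : f) + 1) * ∏ a ∈ Finset.Icc 1 n, ((s.count a).factorial : f) := by
    rw [← Finset.mul_prod_erase _ (fun a => (((PhiM i 0 s).count a).factorial : f)) hmem,
      ← Finset.mul_prod_erase _ (fun a => ((s.count a).factorial : f)) hmem]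
    have h1 : (PhiM i 0 s).count i = s.count i + 1 := by
      rw [count_PhiM0 i i s hpos, if_pos rfl]
    have h2 : ∀ a ∈ (Finset.Icc 1 n).erase i,
        (((PhiM i 0 s).count a).factorial : f) = ((s.count a).factorial : f) := by
      intro a ha
      rw [count_PhiM0 i a s hpos, if_neg (Finset.ne_of_mem_erase ha), Nat.add_zero]
    rw [Finset.prod_congr rfl h2, h1]
    push_cast [Nat.factorial_succ]
    ring
  rw [Wc, Wc, hcard, hD, Finset.prod_range_succ]
  have hne : (∏ a ∈ Finset.Icc 1 n, ((s.count a).factorial : f)) ≠ 0 :=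
    prod_fact_ne_zero n s
  have hne2 : ((s.count i : f) + 1) ≠ 0 := by
    have := Nat.cast_add_one_ne_zero (R := f) (s.count i)
    push_cast at this ⊢
    exact this
  field_simp

lemma Wc_PhiMB (c : f) (n i j : ℕ) (hi1 : 1 ≤ i) (hijn : i + j ≤ n) (s : Multiset ℕ)
    (hpos : ∀ x ∈ s, 0 < x) (hjs : j ∈ s) :
    Wc c n (PhiM i j s) * ((s.count (i + j) : f) + 1)
      = (s.count j : f) * Wc c n s := by
  have hj1 : 1 ≤ j := hpos j hjs
  have hij : i + j ≠ j := by omega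
  have hmem1 : i + j ∈ Finset.Icc 1 n := Finset.mem_Icc.mpr ⟨by omega, hijn⟩
  have hmem2 : j ∈ (Finset.Icc 1 n).erase (i + j) :=
    Finset.mem_erase.mpr ⟨by omega, Finset.mem_Icc.mpr ⟨hj1, by omega⟩⟩
  have hcard := PhiM_cardB i j s hjs
  have hcj : 0 < s.count j := Multiset.count_pos.mpr hjs
  have hc := fun a => count_PhiMB i j a s (by omega)
  have hD : (∏ a ∈ Finset.Icc 1 n, (((PhiM i j s).count a).factorial : f)) * (s.count j : f)
      = ((s.count (i + j) : f) + 1) * ∏ a ∈ Finset.Icc 1 n, ((s.count a).factorial : f) := by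
    rw [← Finset.mul_prod_erase _ (fun a => (((PhiM i j s).count a).factorial : f)) hmem1,
      ← Finset.mul_prod_erase _ (fun a => ((s.count a).factorial : f)) hmem1,
      ← Finset.mul_prod_erase _ (fun a => (((PhiM i j s).count a).factorial : f)) hmem2,
      ← Finset.mul_prod_erase _ (fun a => ((s.count a).factorial : f)) hmem2]
    have h1 : (PhiM i j s).count (i + j) = s.count (i + j) + 1 := by
      rw [hc (i + j), if_neg hij, if_pos rfl, Nat.sub_zero]
    have h1' : (PhiM i j s).count j = s.count j - 1 := by
      rw [hc j, if_pos rfl, if_neg (Ne.symm hij), Nat.add_zero]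
    have h2 : ∀ a ∈ ((Finset.Icc 1 n).erase (i + j)).erase j,
        (((PhiM i j s).count a).factorial : f) = ((s.count a).factorial : f) := by
      intro a ha
      have ha1 : a ≠ j := Finset.ne_of_mem_erase ha
      have ha2 : a ≠ i + j := Finset.ne_of_mem_erase (Finset.mem_of_mem_erase ha)
      rw [hc a, if_neg ha1, if_neg ha2, Nat.sub_zero, Nat.add_zero]
    rw [Finset.prod_congr rfl h2, h1, h1']
    have hfac : (s.count j).factorial = s.count j * (s.count j - 1).factorial := by
      have h3 : s.count j = (s.count j - 1) + 1 := by omega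
      rw [h3, Nat.factorial_succ]
      simp
    rw [hfac]
    push_cast [Nat.factorial_succ]
    ring
  rw [Wc, Wc, hcard]
  have hne : (∏ a ∈ Finset.Icc 1 n, ((s.count a).factorial : f)) ≠ 0 :=
    prod_fact_ne_zero n s
  have hne' : (∏ a ∈ Finset.Icc 1 n, (((PhiM i j s).count a).factorial : f)) ≠ 0 :=
    prod_fact_ne_zero n _
  have hnej : (s.count j : f) ≠ 0 := Nat.cast_ne_zero.mpr (by omega)
  rw [div_mul_eq_mul_div, ← mul_div_assoc, div_eq_div_iff hne' hne]
  linear_combination (-(∏ t ∈ Finset.range (Multiset.card s), (c - (t:f)))) * hD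

lemma PsiM_pos (i j : ℕ) (s : Multiset ℕ) : ∀ x ∈ PsiM i j s, 0 < x :=
  fun _ hx => Multiset.of_mem_filter hx

lemma PsiM_cond (i j : ℕ) (s : Multiset ℕ) : j = 0 ∨ j ∈ PsiM i j s := by
  rcases Nat.eq_zero_or_pos j with hj | hj
  · exact Or.inl hj
  · exact Or.inr (Multiset.mem_filter.mpr ⟨Multiset.mem_cons_self _ _, hj⟩)

lemma PsiM_sum (i j : ℕ) (s : Multiset ℕ) (hmem : i + j ∈ s)
    (hpos : ∀ x ∈ s, 0 < x) : (PsiM i j s).sum + i = s.sum := by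
  have h1 := PhiM_PsiM i j s hmem hpos
  have h2 := PhiM_sum i j (PsiM i j s) (PsiM_cond i j s) (PsiM_pos i j s)
  rw [h1] at h2
  omega

lemma count_PhiM_self (i j : ℕ) (hi : 0 < i) (s : Multiset ℕ) :
    (PhiM i j s).count (i + j) = s.count (i + j) + 1 := by
  rw [PhiM, Multiset.count_cons_self, Multiset.count_erase_of_ne (by omega)]

lemma sum_eq_toFinset_sum (s : Multiset ℕ) :
    s.sum = ∑ a ∈ s.toFinset, s.count a * a := by
  simpa using Finset.sum_multiset_map_count s (id : ℕ → ℕ)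


open MvPolynomial

lemma Ppoly_eq (f : Type*) [Field f] (c : f) (m k : ℕ) :
    Ppoly f c m k = ∑ π ∈ Finset.univ.filter
        (fun π : Nat.Partition (m + k) => ∃ a ∈ π.parts, m < a),
      MvPolynomial.monomial (Emap k (m + k) π.parts) (Wc c (m + k) π.parts) := by
  refine Finset.sum_congr rfl fun π _ => ?_
  have h1 : (∏ a ∈ Finset.Icc 1 (m + k),
        (MvPolynomial.X a : MvPolynomial ℕ f) ^ (π.parts.count a))
      = MvPolynomial.monomial
          (∑ a ∈ Finset.Icc 1 (m + k), Finsupp.single a (π.parts.count a)) 1 := by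
    rw [MvPolynomial.monomial_sum_one]
    exact Finset.prod_congr rfl fun a _ => MvPolynomial.X_pow_eq_monomial
  rw [h1, MvPolynomial.C_mul_X_pow_eq_monomial, MvPolynomial.monomial_mul, mul_one]
  rfl

lemma inner (f : Type*) [Field f] [CharZero f] (c : f) (m k : ℕ) (hk : 1 ≤ k)
    (i : ℕ) (hi : m + 1 ≤ i) (hin : i ≤ m + k) (j : ℕ) (hjr : j ≤ m + k - i) (aj : f) :
    MvPolynomial.C aj * MvPolynomial.X j *
        MvPolynomial.pderiv (i + j) (Ppoly f c m k) =
      ∑ σ ∈ Finset.univ.filter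
          (fun σ : Nat.Partition (m + k - i) => j = 0 ∨ j ∈ σ.parts),
        MvPolynomial.monomial (Emap k (m + k) σ.parts)
          (aj * (Wc c (m + k) (PhiM i j σ.parts) * ((σ.parts.count (i + j) : f) + 1))) := by
  rw [Ppoly_eq, map_sum, Finset.mul_sum]
  have step1 : ∀ π ∈ Finset.univ.filter
      (fun π : Nat.Partition (m + k) => ∃ a ∈ π.parts, m < a),
      MvPolynomial.C aj * MvPolynomial.X j *
          MvPolynomial.pderiv (i + j)
            (MvPolynomial.monomial (Emap k (m + k) π.parts) (Wc c (m + k) π.parts))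
        = MvPolynomial.monomial
            (Finsupp.single j 1 + (Emap k (m + k) π.parts - Finsupp.single (i + j) 1))
            (aj * (Wc c (m + k) π.parts * ((Emap k (m + k) π.parts (i + j) : ℕ) : f))) := by
    intro π _
    rw [MvPolynomial.pderiv_monomial, MvPolynomial.C_mul_X_eq_monomial,
      MvPolynomial.monomial_mul]
  rw [Finset.sum_congr rfl step1]
  rw [← Finset.sum_filter_of_ne (p := fun π : Nat.Partition (m + k) => (i + j) ∈ π.parts)
    (fun π _ hne => by
      by_contra hmem
      apply hne
      have h0 : π.parts.count (i + j) = 0 := Multiset.count_eq_zero.mpr hmem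
      have hE : Emap k (m + k) π.parts (i + j) = 0 := by
        rw [Emap_apply, if_neg (show ¬(i + j = 0) by omega),
          if_pos (show i + j ≤ m + k by omega), h0]
      rw [hE]
      simp)]
  refine Finset.sum_bij'
    (fun π hπ => (⟨PsiM i j π.parts,
        fun {x} hx => PsiM_pos i j π.parts x hx, ?_⟩ : Nat.Partition (m + k - i)))
    (fun σ hσ => (⟨PhiM i j σ.parts, fun {x} hx => ?_, ?_⟩ : Nat.Partition (m + k)))
    ?_ ?_ ?_ ?_ ?_
  · -- sum of PsiM
    have hmem : i + j ∈ π.parts := (Finset.mem_filter.mp hπ).2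
    have hpos : ∀ x ∈ π.parts, 0 < x := fun x hx => π.parts_pos hx
    have := PsiM_sum i j π.parts hmem hpos
    rw [π.parts_sum] at this
    omega
  · -- positivity of PhiM
    rcases Multiset.mem_cons.mp hx with h | h
    · omega
    · exact σ.parts_pos (Multiset.mem_of_mem_erase h)
  · -- sum of PhiM
    have hcond : j = 0 ∨ j ∈ σ.parts := (Finset.mem_filter.mp hσ).2
    have hpos : ∀ x ∈ σ.parts, 0 < x := fun x hx => σ.parts_pos hx
    rw [PhiM_sum i j σ.parts hcond hpos, σ.parts_sum]
    omega
  · -- forward maps into target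
    intro π hπ
    exact Finset.mem_filter.mpr ⟨Finset.mem_univ _, PsiM_cond i j π.parts⟩
  · -- backward maps into source
    intro σ hσ
    refine Finset.mem_filter.mpr ⟨Finset.mem_filter.mpr ⟨Finset.mem_univ _, ?_⟩, ?_⟩
    · exact ⟨i + j, Multiset.mem_cons_self _ _, by omega⟩
    · exact Multiset.mem_cons_self _ _
  · -- left inverse
    intro π hπ
    have hmem : i + j ∈ π.parts := (Finset.mem_filter.mp hπ).2
    have hpos : ∀ x ∈ π.parts, 0 < x := fun x hx => π.parts_pos hx
    exact Nat.Partition.ext (PhiM_PsiM i j π.parts hmem hpos)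
  · -- right inverse
    intro σ hσ
    have hcond : j = 0 ∨ j ∈ σ.parts := (Finset.mem_filter.mp hσ).2
    have hpos : ∀ x ∈ σ.parts, 0 < x := fun x hx => σ.parts_pos hx
    exact Nat.Partition.ext (PsiM_PhiM i j σ.parts hcond hpos)
  · -- terms agree
    intro π hπ
    have hmem : i + j ∈ π.parts := (Finset.mem_filter.mp hπ).2
    have hpos : ∀ x ∈ π.parts, 0 < x := fun x hx => π.parts_pos hx
    have hback := PhiM_PsiM i j π.parts hmem hpos
    dsimp only
    rw [← hback]
    have hpos' : ∀ x ∈ PsiM i j π.parts, 0 < x := PsiM_pos i j π.parts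
    have hsum' : (PsiM i j π.parts).sum + i = m + k := by
      have := PsiM_sum i j π.parts hmem hpos
      rw [π.parts_sum] at this
      omega
    have hcard' : Multiset.card (PsiM i j π.parts) < k := by
      have h1 := multiset_card_le_sum (PsiM i j π.parts) hpos'
      omega
    rw [Emap_PhiM k (m + k) i j (PsiM i j π.parts) hpos' hcard' hsum' (by omega)
      (PsiM_cond i j π.parts)]
    have hE : Emap k (m + k) (PhiM i j (PsiM i j π.parts)) (i + j)
        = (PsiM i j π.parts).count (i + j) + 1 := by
      rw [Emap_apply, if_neg (show ¬(i + j = 0) by omega),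
        if_pos (show i + j ≤ m + k by omega), count_PhiM_self i j (by omega)]
    rw [hE]
    rw [PsiM_PhiM i j (PsiM i j π.parts) (PsiM_cond i j π.parts) hpos']
    push_cast
    ring_nf

lemma inner2 (f : Type*) [Field f] [CharZero f] (lam : f) (hlam : lam ≠ 0)
    (m k : ℕ) (hk : 1 ≤ k) (i : ℕ) (hi : m + 1 ≤ i) (hin : i ≤ m + k)
    (σ : Nat.Partition (m + k - i)) :
    ∑ j ∈ (Finset.range (m + k - i + 1)).filter (fun j => j = 0 ∨ j ∈ σ.parts),
      MvPolynomial.monomial (Emap k (m + k) σ.parts)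
        (((j : f) + lam * ((m + k - i : ℕ) : f)) *
          (Wc (-lam⁻¹) (m + k) (PhiM i j σ.parts) * ((σ.parts.count (i + j) : f) + 1)))
      = 0 := by
  have hpos : ∀ x ∈ σ.parts, 0 < x := fun x hx => σ.parts_pos hx
  have hsum : σ.parts.sum = m + k - i := σ.parts_sum
  have hT : (Finset.range (m + k - i + 1)).filter (fun j => j = 0 ∨ j ∈ σ.parts)
      = insert 0 σ.parts.toFinset := by
    ext j
    simp only [Finset.mem_filter, Finset.mem_range, Finset.mem_insert,
      Multiset.mem_toFinset]
    constructor
    · rintro ⟨_, h⟩; exact h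
    · rintro (h | h)
      · exact ⟨by omega, Or.inl h⟩
      · have := Multiset.le_sum_of_mem h
        exact ⟨by omega, Or.inr h⟩
  rw [hT, ← map_sum]
  have h0T : (0 : ℕ) ∉ σ.parts.toFinset := fun h =>
    absurd (hpos 0 (Multiset.mem_toFinset.mp h)) (by omega)
  have hzero : (∑ j ∈ insert 0 σ.parts.toFinset,
      ((j : f) + lam * ((m + k - i : ℕ) : f)) *
        (Wc (-lam⁻¹) (m + k) (PhiM i j σ.parts) * ((σ.parts.count (i + j) : f) + 1))) = 0 := by
    rw [Finset.sum_insert h0T]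
    have hterm0 : (((0 : ℕ) : f) + lam * ((m + k - i : ℕ) : f)) *
        (Wc (-lam⁻¹) (m + k) (PhiM i 0 σ.parts) * ((σ.parts.count (i + 0) : f) + 1))
        = (lam * ((m + k - i : ℕ) : f)) *
            ((-lam⁻¹ - (Multiset.card σ.parts : f)) * Wc (-lam⁻¹) (m + k) σ.parts) := by
      simp only [Nat.add_zero, Nat.cast_zero, zero_add]
      rw [Wc_PhiM0 (-lam⁻¹) (m + k) i (by omega) (by omega) σ.parts hpos]
    have htermj : ∀ j ∈ σ.parts.toFinset,
        (((j : ℕ) : f) + lam * ((m + k - i : ℕ) : f)) *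
          (Wc (-lam⁻¹) (m + k) (PhiM i j σ.parts) * ((σ.parts.count (i + j) : f) + 1))
        = ((j : f) + lam * ((m + k - i : ℕ) : f)) *
            ((σ.parts.count j : f) * Wc (-lam⁻¹) (m + k) σ.parts) := by
      intro j hj
      have hjs : j ∈ σ.parts := Multiset.mem_toFinset.mp hj
      have hjsum := Multiset.le_sum_of_mem hjs
      rw [Wc_PhiMB (-lam⁻¹) (m + k) i j (by omega) (by omega) σ.parts hpos hjs]
    rw [hterm0, Finset.sum_congr rfl htermj]
    have hexp : ∑ j ∈ σ.parts.toFinset,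
        ((j : f) + lam * ((m + k - i : ℕ) : f)) *
          ((σ.parts.count j : f) * Wc (-lam⁻¹) (m + k) σ.parts)
        = (∑ j ∈ σ.parts.toFinset, ((j : f) * (σ.parts.count j : f))) *
              Wc (-lam⁻¹) (m + k) σ.parts
          + (lam * ((m + k - i : ℕ) : f)) *
              ((∑ j ∈ σ.parts.toFinset, (σ.parts.count j : f)) *
                Wc (-lam⁻¹) (m + k) σ.parts) := by
      rw [Finset.sum_mul, Finset.sum_mul, Finset.mul_sum, ← Finset.sum_add_distrib]
      exact Finset.sum_congr rfl fun j _ => by ring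
    have hS1 : ∑ j ∈ σ.parts.toFinset, ((j : f) * (σ.parts.count j : f))
        = ((m + k - i : ℕ) : f) := by
      have h := sum_eq_toFinset_sum σ.parts
      calc ∑ j ∈ σ.parts.toFinset, ((j : f) * (σ.parts.count j : f))
          = ((∑ j ∈ σ.parts.toFinset, σ.parts.count j * j : ℕ) : f) := by
            push_cast
            exact Finset.sum_congr rfl fun j _ => by ring
        _ = ((σ.parts.sum : ℕ) : f) := by rw [← h]
        _ = ((m + k - i : ℕ) : f) := by rw [hsum]
    have hS2 : ∑ j ∈ σ.parts.toFinset, ((σ.parts.count j : f))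
        = (Multiset.card σ.parts : f) := by
      calc ∑ j ∈ σ.parts.toFinset, ((σ.parts.count j : f))
          = ((∑ j ∈ σ.parts.toFinset, σ.parts.count j : ℕ) : f) := by push_cast; rfl
        _ = (Multiset.card σ.parts : f) := by rw [Multiset.toFinset_sum_count_eq]
    rw [hexp, hS1, hS2]
    have hc1 : lam * (-lam⁻¹) = -1 := by field_simp
    linear_combination (((m + k - i : ℕ) : f) * Wc (-lam⁻¹) (m + k) σ.parts) * hc1
  rw [hzero, map_zero]

end PAux

/-- Let `f` be a field of characteristic `0`, `λ ≠ 0`, `m ≥ 0`, `k ≥ 1`,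
`μ = (m+k+1)λ`, and `P = P^{(−1/λ)}_{mk}`.  Then for every `i ≥ m+1`,
`Σ_{j=0}^{m+k−i} (j + μ − λ(i+1))·x_j·∂P/∂x_{i+j} = 0` (an empty sum for `i > m+k`):
`P` is annihilated by the action of the vector fields `lᵢ = t^{i+1} d/dt`, `i ≥ m+1`,
on the coefficients of tensor fields `h = Σ_j x_j t^{j+μ}(dt)^{−λ}`, i.e. it is a
`G_{m+1}`-invariant of `F_{λμ}`. -/
theorem Ppoly_annihilated (f : Type*) [Field f] [CharZero f] (lam : f) (hlam : lam ≠ 0)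
    (m k : ℕ) (hk : 1 ≤ k) :
    ∀ i : ℕ, m + 1 ≤ i →
      ∑ j ∈ (Finset.range (m + k + 1)).filter (fun j => i + j ≤ m + k),
        MvPolynomial.C ((j : f) + ((m + k + 1 : ℕ) : f) * lam - lam * ((i : f) + 1)) *
          MvPolynomial.X j *
          MvPolynomial.pderiv (i + j) (Ppoly f (-lam⁻¹) m k) = 0 := by
  intro i hi
  by_cases hin : i ≤ m + k
  swap
  · rw [Finset.filter_false_of_mem (fun j hj => by
      rw [Finset.mem_range] at hj
      omega), Finset.sum_empty]
  · have hJ : (Finset.range (m + k + 1)).filter (fun j => i + j ≤ m + k)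
        = Finset.range (m + k - i + 1) := by
      ext j
      simp only [Finset.mem_filter, Finset.mem_range]
      omega
    rw [hJ]
    have hA : ∀ j : ℕ, ((j : f) + ((m + k + 1 : ℕ) : f) * lam - lam * ((i : f) + 1))
        = (j : f) + lam * ((m + k - i : ℕ) : f) := by
      intro j
      have hcast : ((m + k - i : ℕ) : f) = ((m + k : ℕ) : f) - (i : f) := by
        rw [Nat.cast_sub hin]
      rw [hcast]
      push_cast
      ring
    simp only [hA]
    rw [Finset.sum_congr rfl (fun j hj => PAux.inner f (-lam⁻¹) m k hk i hi hin j
      (by rw [Finset.mem_range] at hj; omega) ((j : f) + lam * ((m + k - i : ℕ) : f)))]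
    simp only [Finset.sum_filter]
    rw [Finset.sum_comm]
    refine Finset.sum_eq_zero fun σ _ => ?_
    rw [← Finset.sum_filter]
    exact PAux.inner2 f lam hlam m k hk i hi hin σ


end
end
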